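/- arXiv:1508.06772 — 6 statements merged into one kernel-verified Lean document; each statement's English description precedes it below -/
import Mathlib

section
/- The bounded transform T ↦ S = T(I + T²)^{-1/2} is a bijective correspondence between (possibly unbounded, densely defined) self-adjoint operators T on a complex Hilbert space H and self-adjoint pure contractions S on H, with inverse S ↦ T = S(I - S²)^{-1/2}. -/
noncomputable section

variable {H : Type*} [NormedAddCommGroup H] [InnerProductSpace ℂ H] [CompleteSpace H]

/-- `S = T(I + T²)^{-1/2}`, the *bounded transform* of the (possibly unbounded) operator `T`.
This is witnessed by `C = (I + T²)⁻¹` (a positive bounded operator mapping into the domain of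
`T²` with `(I + T²) ∘ C = I`, which determines `C` uniquely when `T` is self-adjoint) together
with its (unique) positive square root `R = (I + T²)^{-1/2}`, and `S = T ∘ R`. -/
def IsBoundedTransform (T : H →ₗ.[ℂ] H) (S : H →L[ℂ] H) : Prop :=
  ∃ C R : H →L[ℂ] H, C.IsPositive ∧ R.IsPositive ∧ R * R = C ∧
    (∀ x : H, ∃ (h1 : C x ∈ T.domain) (h2 : (T ⟨C x, h1⟩ : H) ∈ T.domain),
        C x + T ⟨(T ⟨C x, h1⟩ : H), h2⟩ = x) ∧
    (∀ x : H, ∃ hx : R x ∈ T.domain, S x = T ⟨R x, hx⟩)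

/-- `S` is a pure contraction: `‖Sx‖ < ‖x‖` for all `x ≠ 0`. -/
def PureContraction (S : H →L[ℂ] H) : Prop := ∀ x : H, x ≠ 0 → ‖S x‖ < ‖x‖

/-- `T = S(I - S²)^{-1/2}`: witnessed by the (unique) positive square root `R` of `I - S²`,
with `D(T) = ran R` and `T ∘ R = S`. -/
def IsInverseBoundedTransform (S : H →L[ℂ] H) (T : H →ₗ.[ℂ] H) : Prop :=
  ∃ R : H →L[ℂ] H, R.IsPositive ∧ R * R = 1 - S * S ∧
    (T.domain : Set H) = Set.range R ∧
    (∀ x : H, ∃ hx : R x ∈ T.domain, (T ⟨R x, hx⟩ : H) = S x)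

/-- The resolvent set of an unbounded operator: `z` such that `T - z` has a (bounded,
everywhere defined) two-sided inverse. -/
def pmapResolventSet (T : H →ₗ.[ℂ] H) : Set ℂ :=
  {z | ∃ B : H →L[ℂ] H,
    (∀ x : H, ∃ h : B x ∈ T.domain, (T ⟨B x, h⟩ : H) - z • B x = x) ∧
    (∀ ψ : T.domain, B ((T ψ : H) - z • (ψ : H)) = ψ)}

/-- The spectrum of an unbounded operator. -/
def pmapSpectrum (T : H →ₗ.[ℂ] H) : Set ℂ := (pmapResolventSet T)ᶜ

/-- The real points of the spectrum of `T` (all of them, if `T` is self-adjoint). -/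
def realSpec (T : H →ₗ.[ℂ] H) : Set ℝ := {x : ℝ | (x : ℂ) ∈ pmapSpectrum T}

/-- `g(S)` for a function `g : ℝ → ℂ`, via the continuous functional calculus of `S`. -/
def boundedCalc (S : H →L[ℂ] H) (g : ℝ → ℂ) : H →L[ℂ] H :=
  cfc (fun z : ℂ => g z.re) S

/-- The homeomorphism `u : (-1,1) → ℝ`, `u(x) = x(1 - x²)^{-1/2}`. -/
def uFun : ℝ → ℝ := fun x => x / Real.sqrt (1 - x ^ 2)

/-- `h ∘ u`, extended by `0` outside `(-1,1)`. -/
def compU (h : ℝ → ℂ) : ℝ → ℂ :=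
  fun x => if x ∈ Set.Ioo (-1 : ℝ) 1 then h (uFun x) else 0

/-- `h(T) := (h ∘ u)(S)`, for a function `h` on `σ(T)`, where `S` is the bounded
transform of `T`. -/
def pmapCalc (S : H →L[ℂ] H) (h : ℝ → ℂ) : H →L[ℂ] H := boundedCalc S (compU h)

/-- `σ̃(S) = σ(S) ∩ (-1,1)`. -/
def tildeSpec (S : H →L[ℂ] H) : Set ℝ := spectrum ℝ S ∩ Set.Ioo (-1) 1

/-- `g ∈ C_c(Ω)`: continuous on `Ω`, vanishing outside a compact subset of `Ω`
(functions on `Ω` are encoded as functions on `ℝ` vanishing identically outside `Ω`). -/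
def MemCc (g : ℝ → ℂ) (Ω : Set ℝ) : Prop :=
  ContinuousOn g Ω ∧ ∃ K : Set ℝ, IsCompact K ∧ K ⊆ Ω ∧ ∀ x ∉ K, g x = 0

/-- `g ∈ C₀(Ω)`: continuous on `Ω` and vanishing at infinity on `Ω`. -/
def MemC0 (g : ℝ → ℂ) (Ω : Set ℝ) : Prop :=
  ContinuousOn g Ω ∧ (∀ x ∉ Ω, g x = 0) ∧
    ∀ ε > 0, ∃ K : Set ℝ, IsCompact K ∧ K ⊆ Ω ∧ ∀ x ∈ Ω \ K, ‖g x‖ < ε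

/-- `g ∈ C_b(Ω)`: continuous and bounded on `Ω`. -/
def MemCb (g : ℝ → ℂ) (Ω : Set ℝ) : Prop :=
  ContinuousOn g Ω ∧ ∃ M : ℝ, ∀ x ∈ Ω, ‖g x‖ ≤ M

/-- The supremum norm `‖f‖_∞` of `f` over `Ω`. -/
def supNorm (f : ℝ → ℂ) (Ω : Set ℝ) : ℝ := sSup ((fun x => ‖f x‖) '' Ω)

/-- The subspace `C*_c(S)H`: the linear span of all `g(S)ψ` with `g ∈ C_c(σ̃(S))`. -/
def ccSpan (S : H →L[ℂ] H) : Submodule ℂ H :=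
  Submodule.span ℂ
    {v : H | ∃ g : ℝ → ℂ, MemCc g (tildeSpec S) ∧ ∃ ψ : H, v = boundedCalc S g ψ}

/-- The subspace `C*₀(S)H`: the linear span of all `g(S)ψ` with `g ∈ C₀(σ̃(S))`. -/
def c0Span (S : H →L[ℂ] H) : Submodule ℂ H :=
  Submodule.span ℂ
    {v : H | ∃ g : ℝ → ℂ, MemC0 g (tildeSpec S) ∧ ∃ ψ : H, v = boundedCalc S g ψ}

/-- `TR ⊂ RT`: the bounded operator `R` commutes with the unbounded operator `T`. -/
def CommutesPMap (T : H →ₗ.[ℂ] H) (R : H →L[ℂ] H) : Prop :=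
  ∀ ψ : T.domain, ∃ h : R (ψ : H) ∈ T.domain, (T ⟨R (ψ : H), h⟩ : H) = R (T ψ)

/-- `A = f₀(T)`: the operator with domain `C*_c(S)H` determined by
`f₀(T) h(T)ψ = (fh)(T)ψ` for `h ∈ C_c(σ(T))` (where `σT` is the spectrum of `T`,
and `h(T) = (h∘u)(S)`). -/
def IsF0 (S : H →L[ℂ] H) (σT : Set ℝ) (f : ℝ → ℂ) (A : H →ₗ.[ℂ] H) : Prop :=
  A.domain = ccSpan S ∧
  ∀ h : ℝ → ℂ, MemCc h σT → ∀ ψ : H,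
    ∃ hm : pmapCalc S h ψ ∈ A.domain,
      A ⟨pmapCalc S h ψ, hm⟩ = pmapCalc S (fun x => f x * h x) ψ

open Polynomial Filter Topology LinearPMap
local notation "⟪" x ", " y "⟫" => @inner ℂ _ _ x y

/-- real sqrt of an operator via cfc -/
def sqrtCLM (a : H →L[ℂ] H) : H →L[ℂ] H := cfc (fun t : ℝ => Real.sqrt t) a

lemma sqrtCLM_nonneg (a : H →L[ℂ] H) : 0 ≤ sqrtCLM a :=
  cfc_nonneg fun x _ => Real.sqrt_nonneg x

lemma sqrtCLM_mul_self (a : H →L[ℂ] H) (ha : 0 ≤ a) : sqrtCLM a * sqrtCLM a = a := by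
  unfold sqrtCLM
  rw [← cfc_mul _ _ a]
  have h2 : cfc (fun t : ℝ => Real.sqrt t * Real.sqrt t) a = cfc (id : ℝ → ℝ) a :=
    cfc_congr fun x hx => Real.mul_self_sqrt (spectrum_nonneg_of_nonneg ha hx)
  rw [h2, cfc_id ℝ a]

lemma sqrtCLM_unique {a b : H →L[ℂ] H} (hb : 0 ≤ b) (h : b * b = a) : sqrtCLM a = b := by
  subst h
  unfold sqrtCLM
  have h1 : b * b = b ^ 2 := (sq b).symm
  rw [h1, ← cfc_pow_id (R := ℝ) b 2, ← cfc_comp' (fun t : ℝ => Real.sqrt t) (fun t : ℝ => t ^ 2) b]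
  have h2 : cfc (fun t : ℝ => Real.sqrt (t ^ 2)) b = cfc (id : ℝ → ℝ) b :=
    cfc_congr fun x hx => by
      simp [Real.sqrt_sq_eq_abs, abs_of_nonneg (spectrum_nonneg_of_nonneg hb hx)]
  rw [h2, cfc_id ℝ b]

/-- polynomial approximation of the cfc -/
lemma cfc_approx_poly (a : H →L[ℂ] H) (ha : IsSelfAdjoint a) {f : ℝ → ℝ} (hf : Continuous f)
    {ε : ℝ} (hε : 0 < ε) : ∃ p : ℝ[X], ‖cfc f a - aeval a p‖ ≤ ε := by
  set M : ℝ := ‖a‖ * ‖(1 : H →L[ℂ] H)‖ + 1 with hM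
  have hspec : spectrum ℝ a ⊆ Set.Icc (-M) M := by
    intro k hk
    have := spectrum.norm_le_norm_mul_of_mem hk
    rw [Real.norm_eq_abs] at this
    have : |k| ≤ M := by nlinarith
    exact abs_le.mp this
  obtain ⟨p, hp⟩ := exists_polynomial_near_of_continuousOn (-M) M f hf.continuousOn ε hε
  refine ⟨p, ?_⟩
  rw [← cfc_polynomial p a, ← cfc_sub _ _ a]
  refine norm_cfc_le hε.le fun x hx => ?_
  rw [Real.norm_eq_abs, abs_sub_comm]
  exact (hp x (hspec hx)).le

lemma cfc_tendsto_poly (a : H →L[ℂ] H) (ha : IsSelfAdjoint a) {f : ℝ → ℝ} (hf : Continuous f) :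
    ∃ p : ℕ → ℝ[X], Tendsto (fun n => aeval a (p n)) atTop (𝓝 (cfc f a)) := by
  have h : ∀ n : ℕ, ∃ p : ℝ[X], ‖cfc f a - aeval a p‖ ≤ 1 / (n + 1) :=
    fun n => cfc_approx_poly a ha hf (by positivity)
  choose p hp using h
  refine ⟨p, ?_⟩
  rw [tendsto_iff_norm_sub_tendsto_zero]
  refine squeeze_zero (fun n => norm_nonneg _) (fun n => ?_) tendsto_one_div_add_atTop_nhds_zero_nat
  rw [norm_sub_rev]; exact hp n

lemma commute_aeval {a V : H →L[ℂ] H} (h : Commute V a) (p : ℝ[X]) : Commute V (aeval a p) := by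
  induction p using Polynomial.induction_on with
  | C c => simpa [Polynomial.aeval_C, Algebra.algebraMap_eq_smul_one] using Commute.smul_right (Commute.one_right V) c
  | add p q hp hq => simpa [_root_.map_add] using hp.add_right hq
  | monomial n c hp => simpa [map_mul, map_pow, aeval_X, aeval_C, Algebra.algebraMap_eq_smul_one, smul_mul_assoc, one_mul] using Commute.smul_right ((Commute.pow_right h (n+1))) c

lemma commute_cfc_of_commute {a V : H →L[ℂ] H} (ha : IsSelfAdjoint a) (h : Commute V a)
    {f : ℝ → ℝ} (hf : Continuous f) : Commute V (cfc f a) := by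
  obtain ⟨p, hp⟩ := cfc_tendsto_poly a ha hf
  have h1 : Tendsto (fun n => V * aeval a (p n)) atTop (𝓝 (V * cfc f a)) :=
    (continuous_mul_left V).continuousAt.tendsto.comp hp
  have h2 : Tendsto (fun n => aeval a (p n) * V) atTop (𝓝 (cfc f a * V)) :=
    (continuous_mul_right V).continuousAt.tendsto.comp hp
  have : (fun n => V * aeval a (p n)) = fun n => aeval a (p n) * V :=
    funext fun n => commute_aeval h (p n)
  rw [this] at h1
  exact tendsto_nhds_unique h1 h2

lemma sqrtCLM_comm {a V : H →L[ℂ] H} (ha : IsSelfAdjoint a) (h : Commute V a) :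
    Commute V (sqrtCLM a) := commute_cfc_of_commute ha h Real.continuous_sqrt


section helpers
omit [CompleteSpace H]

lemma pmap_congr (T : H →ₗ.[ℂ] H) {v w : H} (h : v ∈ T.domain) (e : v = w) (h' : w ∈ T.domain) :
    T ⟨v, h⟩ = T ⟨w, h'⟩ := by subst e; rfl

lemma pmap_add {T : H →ₗ.[ℂ] H} {a b : H} (ha : a ∈ T.domain) (hb : b ∈ T.domain) :
    T ⟨a + b, add_mem ha hb⟩ = T ⟨a, ha⟩ + T ⟨b, hb⟩ := by
  have h : (⟨a + b, add_mem ha hb⟩ : T.domain) = ⟨a, ha⟩ + ⟨b, hb⟩ := rfl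
  rw [h, LinearPMap.map_add]

lemma pmap_sub {T : H →ₗ.[ℂ] H} {a b : H} (ha : a ∈ T.domain) (hb : b ∈ T.domain) :
    T ⟨a - b, sub_mem ha hb⟩ = T ⟨a, ha⟩ - T ⟨b, hb⟩ := by
  have h : (⟨a - b, sub_mem ha hb⟩ : T.domain) = ⟨a, ha⟩ - ⟨b, hb⟩ := rfl
  rw [h, LinearPMap.map_sub]

lemma pmap_smul_real {T : H →ₗ.[ℂ] H} {a : H} (c : ℝ) (ha : a ∈ T.domain)
    (h' : c • a ∈ T.domain) : T ⟨c • a, h'⟩ = c • T ⟨a, ha⟩ := by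
  have e1 : c • a = (c : ℂ) • a := (Complex.coe_smul c a).symm
  have hm : (c : ℂ) • a ∈ T.domain := Submodule.smul_mem _ _ ha
  rw [pmap_congr T h' e1 hm]
  have h : (⟨(c : ℂ) • a, hm⟩ : T.domain) = (c : ℂ) • ⟨a, ha⟩ := rfl
  rw [h, LinearPMap.map_smul, Complex.coe_smul]

end helpers

lemma pmap_pow_comm {T : H →ₗ.[ℂ] H} {C : H →L[ℂ] H}
    (hC : ∀ (ψ : H) (hψ : ψ ∈ T.domain), ∃ h : C ψ ∈ T.domain, T ⟨C ψ, h⟩ = C (T ⟨ψ, hψ⟩)) :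
    ∀ (n : ℕ) (ψ : H) (hψ : ψ ∈ T.domain),
      ∃ h : (C ^ n) ψ ∈ T.domain, T ⟨(C ^ n) ψ, h⟩ = (C ^ n) (T ⟨ψ, hψ⟩) := by
  intro n
  induction n with
  | zero =>
    intro ψ hψ
    have e : (C ^ 0) ψ = ψ := by simp
    refine ⟨e ▸ hψ, ?_⟩
    rw [pmap_congr T _ e hψ]
    simp
  | succ n ih =>
    intro ψ hψ
    obtain ⟨h1, e1⟩ := hC ψ hψ
    obtain ⟨h2, e2⟩ := ih (C ψ) h1
    have hx : (C ^ (n + 1)) ψ = (C ^ n) (C ψ) := by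
      rw [pow_succ]; rfl
    refine ⟨by rw [hx]; exact h2, ?_⟩
    rw [pmap_congr T _ hx h2, e2, e1, ← ContinuousLinearMap.comp_apply, ← ContinuousLinearMap.mul_def,
      ← pow_succ]

lemma pmap_poly_comm {T : H →ₗ.[ℂ] H} {C : H →L[ℂ] H}
    (hC : ∀ (ψ : H) (hψ : ψ ∈ T.domain), ∃ h : C ψ ∈ T.domain, T ⟨C ψ, h⟩ = C (T ⟨ψ, hψ⟩))
    (p : ℝ[X]) :
    ∀ (ψ : H) (hψ : ψ ∈ T.domain),
      ∃ h : (aeval C p) ψ ∈ T.domain, T ⟨(aeval C p) ψ, h⟩ = (aeval C p) (T ⟨ψ, hψ⟩) := by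
  induction p using Polynomial.induction_on' with
  | add p q hp hq =>
    intro ψ hψ
    obtain ⟨h1, e1⟩ := hp ψ hψ
    obtain ⟨h2, e2⟩ := hq ψ hψ
    have hx : (aeval C (p + q)) ψ = (aeval C p) ψ + (aeval C q) ψ := by
      rw [_root_.map_add]; rfl
    refine ⟨hx ▸ add_mem h1 h2, ?_⟩
    rw [pmap_congr T _ hx (add_mem h1 h2), pmap_add h1 h2, e1, e2, _root_.map_add]
    rfl
  | monomial n c =>
    intro ψ hψ
    obtain ⟨h1, e1⟩ := pmap_pow_comm hC n ψ hψ
    have hx : ∀ v : H, (aeval C (monomial n c)) v = c • ((C ^ n) v) := by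
      intro v
      rw [aeval_monomial]
      simp [Algebra.algebraMap_eq_smul_one, ContinuousLinearMap.mul_apply, smul_mul_assoc]
    have hm : c • ((C ^ n) ψ) ∈ T.domain := by
      have e1' : c • ((C ^ n) ψ) = (c : ℂ) • ((C ^ n) ψ) := (Complex.coe_smul c _).symm
      rw [e1']; exact Submodule.smul_mem _ _ h1
    refine ⟨(hx ψ) ▸ hm, ?_⟩
    rw [pmap_congr T _ (hx ψ) hm, pmap_smul_real c h1 hm, e1, hx (T ⟨ψ, hψ⟩)]
lemma pmap_transfer {T1 T2 : H →ₗ.[ℂ] H} (h : T1 = T2) {x : H} (hx : x ∈ T1.domain) :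
    ∃ hx2 : x ∈ T2.domain, T1 ⟨x, hx⟩ = T2 ⟨x, hx2⟩ := by subst h; exact ⟨hx, rfl⟩

lemma pmap_symm {T : H →ₗ.[ℂ] H} (hsa : IsSelfAdjoint T) (x y : T.domain) :
    ⟪T x, y⟫ = ⟪(x : H), T y⟫ := by
  have hT := hsa.dense_domain
  rw [LinearPMap.isSelfAdjoint_def] at hsa
  have h := LinearPMap.adjoint_isFormalAdjoint hT
  rw [hsa] at h
  exact h x y

lemma pmap_graph_closed {T : H →ₗ.[ℂ] H} (hsa : IsSelfAdjoint T) :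
    IsClosed (T.graph : Set (H × H)) := by
  have hT := hsa.dense_domain
  rw [LinearPMap.isSelfAdjoint_def] at hsa
  have key : (T.graph : Set (H × H)) =
      ⋂ x : T.domain, {p : H × H | ⟪p.2, (x : H)⟫ = ⟪p.1, T x⟫} := by
    ext p
    simp only [SetLike.mem_coe, LinearPMap.mem_graph_iff, Set.mem_iInter, Set.mem_setOf_eq]
    constructor
    · rintro ⟨y, hy1, hy2⟩ x
      have h := LinearPMap.adjoint_isFormalAdjoint hT
      rw [hsa] at h
      rw [← hy1, ← hy2]
      exact h y x
    · intro hp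
      have hmem : p.1 ∈ T.adjoint.domain :=
        LinearPMap.mem_adjoint_domain_of_exists _ ⟨p.2, fun x => hp x⟩
      have happ : T.adjoint ⟨p.1, hmem⟩ = p.2 :=
        LinearPMap.adjoint_apply_eq hT _ fun x => hp x
      obtain ⟨hm2, he⟩ := pmap_transfer hsa hmem
      exact ⟨⟨p.1, hm2⟩, rfl, by rw [← he]; exact happ⟩
  rw [key]
  exact isClosed_iInter fun x => isClosed_eq
    (Continuous.inner continuous_snd continuous_const)
    (Continuous.inner continuous_fst continuous_const)

lemma pmap_closed_seq {T : H →ₗ.[ℂ] H} (hsa : IsSelfAdjoint T) {u : ℕ → H} {x v : H}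
    (hu : ∀ n, u n ∈ T.domain) (hx : Tendsto u atTop (𝓝 x))
    (hv : Tendsto (fun n => T ⟨u n, hu n⟩) atTop (𝓝 v)) :
    ∃ h : x ∈ T.domain, T ⟨x, h⟩ = v := by
  have hc := pmap_graph_closed hsa
  have hmem : ∀ n, ((u n, T ⟨u n, hu n⟩) : H × H) ∈ (T.graph : Set (H × H)) := fun n => by
    rw [SetLike.mem_coe, LinearPMap.mem_graph_iff]; exact ⟨⟨u n, hu n⟩, rfl, rfl⟩
  have hlim : Tendsto (fun n => ((u n, T ⟨u n, hu n⟩) : H × H)) atTop (𝓝 (x, v)) :=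
    hx.prodMk_nhds hv
  have hxv := hc.mem_of_tendsto hlim (Filter.Eventually.of_forall hmem)
  rw [SetLike.mem_coe, LinearPMap.mem_graph_iff] at hxv
  obtain ⟨y, h3, h4⟩ := hxv
  have h3' : (y : H) = x := h3
  have h4' : T y = v := h4
  refine ⟨h3' ▸ y.2, ?_⟩
  rw [← h4']
  exact (pmap_congr T y.2 h3' _).symm

/-- von Neumann: existence of `C = (1+T²)⁻¹` and `B = T C` as bounded operators. -/
lemma vonNeumann {T : H →ₗ.[ℂ] H} (hsa : IsSelfAdjoint T) :
    ∃ C B : H →L[ℂ] H,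
      (∀ x : H, ∃ h : C x ∈ T.domain, T ⟨C x, h⟩ = B x) ∧
      (∀ x : H, ∃ h : B x ∈ T.domain, T ⟨B x, h⟩ = x - C x) := by
  have hT := hsa.dense_domain
  set W := WithLp 2 (H × H)
  let E2 : W ≃L[ℂ] H × H := WithLp.prodContinuousLinearEquiv 2 ℂ H H
  let K : Submodule ℂ W := T.graph.comap (E2.toLinearEquiv : W ≃ₗ[ℂ] H × H).toLinearMap
  have hKclosed : IsClosed (K : Set W) := by
    have : (K : Set W) = E2 ⁻¹' (T.graph : Set (H × H)) := rfl
    rw [this]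
    exact (pmap_graph_closed hsa).preimage E2.continuous
  haveI : CompleteSpace K := hKclosed.completeSpace_coe
  let ι : H →L[ℂ] W := E2.symm.toContinuousLinearMap.comp (ContinuousLinearMap.inl ℂ H H)
  let P := K.orthogonalProjectionOnto
  let C : H →L[ℂ] H := (ContinuousLinearMap.fst ℂ H H).comp
    (E2.toContinuousLinearMap.comp ((K.subtypeL).comp (P.comp ι)))
  let B : H →L[ℂ] H := (ContinuousLinearMap.snd ℂ H H).comp
    (E2.toContinuousLinearMap.comp ((K.subtypeL).comp (P.comp ι)))
  refine ⟨C, B, ?_, ?_⟩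
  · intro x
    have hq : ((P (ι x) : W)) ∈ K := (P (ι x)).2
    have hq2 : (C x, B x) ∈ T.graph := hq
    rw [LinearPMap.mem_graph_iff] at hq2
    obtain ⟨y, hy1, hy2⟩ := hq2
    have hy1' : (y : H) = C x := hy1
    have hy2' : T y = B x := hy2
    refine ⟨hy1' ▸ y.2, ?_⟩
    rw [← hy2']
    exact (pmap_congr T y.2 hy1' _).symm
  · intro x
    have horth : (ι x) - ((P (ι x) : W)) ∈ Kᗮ := K.sub_starProjection_mem_orthogonal (ι x)
    have hkey : ∀ ψ : T.domain, ⟪(ψ : H), x - C x⟫ + ⟪T ψ, -(B x)⟫ = 0 := by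
      intro ψ
      have hgm : E2.symm ((ψ : H), T ψ) ∈ K := by
        show E2 (E2.symm _) ∈ T.graph
        rw [E2.apply_symm_apply]
        exact LinearPMap.mem_graph T ψ
      have h0 := (Submodule.mem_orthogonal K _).mp horth _ hgm
      have h1 : ⟪(WithLp.ofLp (E2.symm ((ψ : H), T ψ) : W)).fst, (WithLp.ofLp ((ι x) - ((P (ι x)) : W) : W)).fst⟫
          + ⟪(WithLp.ofLp (E2.symm ((ψ : H), T ψ) : W)).snd, (WithLp.ofLp ((ι x) - ((P (ι x)) : W) : W)).snd⟫ = 0 := by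
        rw [← WithLp.prod_inner_apply]; exact h0
      have e1 : (WithLp.ofLp (E2.symm ((ψ : H), T ψ) : W)).fst = (ψ : H) := rfl
      have e2 : (WithLp.ofLp (E2.symm ((ψ : H), T ψ) : W)).snd = (T ψ : H) := rfl
      have e3 : (WithLp.ofLp ((ι x) - ((P (ι x)) : W) : W)).fst = x - C x := rfl
      have e4 : (WithLp.ofLp ((ι x) - ((P (ι x)) : W) : W)).snd = 0 - B x := rfl
      rw [e1, e2, e3, e4] at h1
      rw [zero_sub] at h1
      exact h1
    have hkey2 : ∀ ψ : T.domain, ⟪x - C x, (ψ : H)⟫ = ⟪B x, T ψ⟫ := by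
      intro ψ
      have h := hkey ψ
      rw [inner_neg_right, add_neg_eq_zero] at h
      rw [← inner_conj_symm, h, inner_conj_symm]
    have hmem : B x ∈ T.adjoint.domain :=
      LinearPMap.mem_adjoint_domain_of_exists _ ⟨x - C x, hkey2⟩
    have happ : T.adjoint ⟨B x, hmem⟩ = x - C x :=
      LinearPMap.adjoint_apply_eq hT _ hkey2
    rw [LinearPMap.isSelfAdjoint_def] at hsa
    obtain ⟨hm2, he⟩ := pmap_transfer hsa hmem
    exact ⟨hm2, by rw [← he, happ]⟩

lemma pmap_inj {T : H →ₗ.[ℂ] H} (hsa : IsSelfAdjoint T) {u : H} (hu : u ∈ T.domain)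
    (hu2 : (T ⟨u, hu⟩ : H) ∈ T.domain) (h : u + T ⟨(T ⟨u, hu⟩ : H), hu2⟩ = 0) : u = 0 := by
  have hsym := pmap_symm hsa
  have h1 : ⟪u + (T ⟨(T ⟨u, hu⟩ : H), hu2⟩ : H), u⟫ = 0 := by rw [h]; simp
  rw [inner_add_left] at h1
  have h2' : ⟪(T ⟨(T ⟨u, hu⟩ : H), hu2⟩ : H), u⟫ = ⟪(T ⟨u, hu⟩ : H), (T ⟨u, hu⟩ : H)⟫ :=
    hsym ⟨_, hu2⟩ ⟨u, hu⟩
  have h2 : ⟪u, u⟫ + ⟪(T ⟨u, hu⟩ : H), (T ⟨u, hu⟩ : H)⟫ = 0 := by rw [← h2']; exact h1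
  have h3 := congrArg RCLike.re h2
  rw [_root_.map_add, inner_self_eq_norm_sq, inner_self_eq_norm_sq, _root_.map_zero] at h3
  have hn : ‖u‖ = 0 := by nlinarith [sq_nonneg ‖(T ⟨u, hu⟩ : H)‖, norm_nonneg u]
  simpa using hn

/-- The core construction: everything about the bounded transform of a self-adjoint `T`. -/
lemma btCore {T : H →ₗ.[ℂ] H} (hsa : IsSelfAdjoint T) :
    ∃ C R S : H →L[ℂ] H,
      C.IsPositive ∧ R.IsPositive ∧ R * R = C ∧
      (∀ x : H, ∃ (h1 : C x ∈ T.domain) (h2 : (T ⟨C x, h1⟩ : H) ∈ T.domain),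
          C x + T ⟨(T ⟨C x, h1⟩ : H), h2⟩ = x) ∧
      (∀ x : H, ∃ hx : R x ∈ T.domain, S x = T ⟨R x, hx⟩) ∧
      IsSelfAdjoint S ∧ (∀ x : H, x ≠ 0 → ‖S x‖ < ‖x‖) ∧
      (S * S = 1 - C) ∧
      ((T.domain : Set H) = Set.range R) := by
  have hT := hsa.dense_domain
  have hsym := pmap_symm hsa
  obtain ⟨C, B, hCB1, hCB2⟩ := vonNeumann hsa
  have hCd : ∀ x : H, C x ∈ T.domain := fun x => (hCB1 x).choose
  have hTC : ∀ (x : H) (h : C x ∈ T.domain), T ⟨C x, h⟩ = B x := fun x h => (hCB1 x).choose_spec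
  have hBd : ∀ x : H, B x ∈ T.domain := fun x => (hCB2 x).choose
  have hTB : ∀ (x : H) (h : B x ∈ T.domain), T ⟨B x, h⟩ = x - C x := fun x h =>
    (hCB2 x).choose_spec
  -- decomposition of y
  have hdec : ∀ y : H, ∀ z : H, ⟪z, y⟫ = ⟪z, C y⟫ + ⟪z, (T ⟨B y, hBd y⟩ : H)⟫ := by
    intro y z
    rw [← inner_add_right]
    congr 1
    rw [hTB y]
    abel
  -- B is symmetric
  have hBsa : ∀ x y : H, ⟪B x, y⟫ = ⟪x, B y⟫ := by
    intro x y
    rw [hdec y (B x)]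
    have e1 : ⟪B x, C y⟫ = ⟪C x, B y⟫ := by
      rw [← hTC x (hCd x), ← hTC y (hCd y)]
      exact hsym ⟨C x, hCd x⟩ ⟨C y, hCd y⟩
    have e2 : ⟪B x, (T ⟨B y, hBd y⟩ : H)⟫ = ⟪x - C x, B y⟫ := by
      rw [← hTB x (hBd x)]
      exact (hsym ⟨B x, hBd x⟩ ⟨B y, hBd y⟩).symm
    rw [e1, e2, inner_sub_left]
    ring
  -- C is symmetric
  have hCBexp : ∀ x y : H, ⟪C x, y⟫ = ⟪C x, C y⟫ + ⟪B x, B y⟫ := by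
    intro x y
    rw [hdec y (C x)]
    congr 1
    rw [← hTC x (hCd x)]
    exact (hsym ⟨C x, hCd x⟩ ⟨B y, hBd y⟩).symm
  have hCsa : ∀ x y : H, ⟪C x, y⟫ = ⟪x, C y⟫ := by
    intro x y
    calc ⟪C x, y⟫ = ⟪C x, C y⟫ + ⟪B x, B y⟫ := hCBexp x y
      _ = starRingEnd ℂ (⟪C y, C x⟫ + ⟪B y, B x⟫) := by
          rw [_root_.map_add, inner_conj_symm, inner_conj_symm]
      _ = starRingEnd ℂ ⟪C y, x⟫ := by rw [← hCBexp y x]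
      _ = ⟪x, C y⟫ := inner_conj_symm _ _
  have hCsa' : IsSelfAdjoint C :=
    ContinuousLinearMap.isSelfAdjoint_iff_isSymmetric.mpr fun x y => hCsa x y
  have hCpos : C.IsPositive := by
    refine ⟨ContinuousLinearMap.isSelfAdjoint_iff_isSymmetric.mp hCsa', fun x => ?_⟩
    have h2 : RCLike.re ⟪C x, x⟫ = ‖C x‖^2 + ‖B x‖^2 := by
      rw [hCBexp x x, _root_.map_add, inner_self_eq_norm_sq, inner_self_eq_norm_sq]
    show 0 ≤ RCLike.re ⟪C x, x⟫
    rw [h2]; positivity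
  have hC0 : (0 : H →L[ℂ] H) ≤ C := (ContinuousLinearMap.nonneg_iff_isPositive C).mpr hCpos
  -- C ∘ T ⊆ B
  have hBC : ∀ (ψ : H) (hψ : ψ ∈ T.domain), C (T ⟨ψ, hψ⟩ : H) = B ψ := by
    intro ψ hψ
    refine ext_inner_left ℂ fun z => ?_
    calc ⟪z, C (T ⟨ψ, hψ⟩ : H)⟫ = ⟪C z, (T ⟨ψ, hψ⟩ : H)⟫ := by
          rw [← inner_conj_symm, hCsa, inner_conj_symm]
      _ = ⟪(T ⟨C z, hCd z⟩ : H), (ψ : H)⟫ := (hsym ⟨C z, hCd z⟩ ⟨ψ, hψ⟩).symm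
      _ = ⟪B z, ψ⟫ := by rw [hTC z]
      _ = ⟪z, B ψ⟫ := hBsa z ψ
  have hCcomm : ∀ (ψ : H) (hψ : ψ ∈ T.domain),
      ∃ h : C ψ ∈ T.domain, T ⟨C ψ, h⟩ = C (T ⟨ψ, hψ⟩ : H) := by
    intro ψ hψ
    exact ⟨hCd ψ, by rw [hTC ψ (hCd ψ), hBC ψ hψ]⟩
  -- R := sqrt C
  set R : H →L[ℂ] H := sqrtCLM C with hRdef
  have hR0 : (0 : H →L[ℂ] H) ≤ R := sqrtCLM_nonneg C
  have hRpos : R.IsPositive := (ContinuousLinearMap.nonneg_iff_isPositive R).mp hR0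
  have hRR : R * R = C := sqrtCLM_mul_self C hC0
  have hRsa : ∀ x y : H, ⟪R x, y⟫ = ⟪x, R y⟫ :=
    ContinuousLinearMap.isSelfAdjoint_iff_isSymmetric.mp hRpos.isSelfAdjoint
  have hRRapp : ∀ x : H, R (R x) = C x := fun x => by
    rw [← ContinuousLinearMap.mul_apply, hRR]
  -- R commutes with T
  obtain ⟨p, hp⟩ := cfc_tendsto_poly C hCsa' Real.continuous_sqrt
  have happly : ∀ (v : H) {A : ℕ → H →L[ℂ] H} {L : H →L[ℂ] H},
      Tendsto A atTop (𝓝 L) → Tendsto (fun n => A n v) atTop (𝓝 (L v)) := by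
    intro v A L h
    have : Continuous fun M : H →L[ℂ] H => M v := by
      exact (ContinuousLinearMap.apply ℂ H v).continuous
    exact ((this.tendsto L).comp h)
  have hRcomm : ∀ (ψ : H) (hψ : ψ ∈ T.domain),
      ∃ h : R ψ ∈ T.domain, T ⟨R ψ, h⟩ = R (T ⟨ψ, hψ⟩ : H) := by
    intro ψ hψ
    have hu : ∀ n, (aeval C (p n)) ψ ∈ T.domain := fun n => (pmap_poly_comm hCcomm (p n) ψ hψ).1
    have hx : Tendsto (fun n => (aeval C (p n)) ψ) atTop (𝓝 (R ψ)) := happly ψ hp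
    have hv : Tendsto (fun n => (T ⟨(aeval C (p n)) ψ, hu n⟩ : H)) atTop
        (𝓝 (R (T ⟨ψ, hψ⟩ : H))) := by
      have he : ∀ n, (T ⟨(aeval C (p n)) ψ, hu n⟩ : H) = (aeval C (p n)) (T ⟨ψ, hψ⟩ : H) :=
        fun n => (pmap_poly_comm hCcomm (p n) ψ hψ).2
      simp only [he]
      exact happly _ hp
    exact pmap_closed_seq hsa hu hx hv
  -- the key identity
  have hkey : ∀ ψ : T.domain, ‖R (T ψ : H)‖^2 + ‖R (ψ : H)‖^2 = ‖(ψ : H)‖^2 := by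
    intro ψ
    have e1 : ⟪R (T ψ : H), R (T ψ : H)⟫ = ⟪(T ψ : H), C (T ψ : H)⟫ := by
      rw [hRsa, hRRapp]
    have e15 : C (T ψ : H) = B (ψ : H) := by
      have := hBC (ψ : H) ψ.2
      rw [← this]
    have e2 : ⟪(T ψ : H), B (ψ : H)⟫ = ⟪(ψ : H), (ψ : H)⟫ - ⟪R (ψ : H), R (ψ : H)⟫ := by
      have e3 : ⟪B (ψ : H), (T ψ : H)⟫ = ⟪(ψ : H) - C (ψ : H), (ψ : H)⟫ := by
        rw [← hTB (ψ : H) (hBd _)]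
        exact (hsym ⟨B (ψ : H), hBd _⟩ ψ).symm
      have e4 : ⟪(T ψ : H), B (ψ : H)⟫ = ⟪(ψ : H), (ψ : H) - C (ψ : H)⟫ := by
        rw [← inner_conj_symm, e3, inner_conj_symm]
      rw [e4, inner_sub_right]
      congr 1
      rw [← hRRapp, ← hRsa]
    have hfin : ⟪R (T ψ : H), R (T ψ : H)⟫ = ⟪(ψ : H), (ψ : H)⟫ - ⟪R (ψ : H), R (ψ : H)⟫ := by
      rw [e1, e15]; exact e2
    have h5 := congrArg RCLike.re hfin
    rw [_root_.map_sub, inner_self_eq_norm_sq, inner_self_eq_norm_sq, inner_self_eq_norm_sq] at h5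
    linarith
  -- construct S
  let S₀ : T.domain →ₗ[ℂ] H := R.toLinearMap.comp T.toFun
  have hS₀ : ∀ ψ : T.domain, S₀ ψ = R (T ψ : H) := fun ψ => rfl
  have hS₀bound : ∀ ψ : T.domain, ‖S₀ ψ‖ ≤ 1 * ‖(ψ : H)‖ := by
    intro ψ
    rw [hS₀, one_mul]
    have := hkey ψ
    nlinarith [norm_nonneg (R (T ψ : H)), norm_nonneg (ψ : H), sq_nonneg ‖R (ψ : H)‖]
  let S₀c : T.domain →L[ℂ] H := S₀.mkContinuous 1 hS₀bound
  let S : H →L[ℂ] H := S₀c.extend (Submodule.subtypeL T.domain)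
  have hSext : ∀ ψ : T.domain, S (ψ : H) = R (T ψ : H) := fun ψ =>
    ContinuousLinearMap.extend_eq _ hT.denseRange_val
      isUniformEmbedding_subtype_val.isUniformInducing ψ
  -- T (R x) = S x for all x
  have hTRS : ∀ x : H, ∃ hx : R x ∈ T.domain, (T ⟨R x, hx⟩ : H) = S x := by
    intro x
    obtain ⟨u, hu, hux⟩ := mem_closure_iff_seq_limit.mp (hT x)
    have hud : ∀ n, R (u n) ∈ T.domain := fun n => (hRcomm (u n) (hu n)).1
    have h1 : Tendsto (fun n => R (u n)) atTop (𝓝 (R x)) := (R.continuous.tendsto x).comp hux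
    have h2 : Tendsto (fun n => (T ⟨R (u n), hud n⟩ : H)) atTop (𝓝 (S x)) := by
      have he : ∀ n, (T ⟨R (u n), hud n⟩ : H) = S (u n) := by
        intro n
        rw [(hRcomm (u n) (hu n)).2, ← hSext ⟨u n, hu n⟩]
      simp only [he]
      exact (S.continuous.tendsto x).comp hux
    exact pmap_closed_seq hsa hud h1 h2
  -- clause 1 of IsBoundedTransform
  have hclause1 : ∀ x : H, ∃ (h1 : C x ∈ T.domain) (h2 : (T ⟨C x, h1⟩ : H) ∈ T.domain),
      C x + T ⟨(T ⟨C x, h1⟩ : H), h2⟩ = x := by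
    intro x
    refine ⟨hCd x, (hTC x (hCd x)).symm ▸ hBd x, ?_⟩
    rw [pmap_congr T _ (hTC x (hCd x)) (hBd x), hTB x (hBd x)]
    abel
  -- S is self-adjoint
  have hSinner : ∀ x y : H, ⟪S x, y⟫ = ⟪x, S y⟫ := by
    have hcf : Continuous fun q : H × H => ⟪S q.1, q.2⟫ :=
      Continuous.inner (S.continuous.comp continuous_fst) continuous_snd
    have hcg : Continuous fun q : H × H => ⟪q.1, S q.2⟫ :=
      Continuous.inner continuous_fst (S.continuous.comp continuous_snd)
    have heq : Set.EqOn (fun q : H × H => ⟪S q.1, q.2⟫) (fun q : H × H => ⟪q.1, S q.2⟫)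
        ((T.domain : Set H) ×ˢ (T.domain : Set H)) := by
      rintro ⟨a, b⟩ ⟨ha, hb⟩
      show ⟪S a, b⟫ = ⟪a, S b⟫
      rw [hSext ⟨a, ha⟩, hSext ⟨b, hb⟩]
      calc ⟪R (T ⟨a, ha⟩ : H), b⟫ = ⟪(T ⟨a, ha⟩ : H), R b⟫ := hRsa _ _
        _ = ⟪a, (T ⟨R b, (hRcomm b hb).1⟩ : H)⟫ := hsym ⟨a, ha⟩ ⟨R b, (hRcomm b hb).1⟩
        _ = ⟪a, R (T ⟨b, hb⟩ : H)⟫ := by rw [(hRcomm b hb).2]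
    have := Continuous.ext_on (hT.prod hT) hcf hcg heq
    intro x y
    exact congrFun this (x, y)
  have hSsa : IsSelfAdjoint S :=
    ContinuousLinearMap.isSelfAdjoint_iff_isSymmetric.mpr fun x y => hSinner x y
  -- S * S = 1 - C
  have hRS : ∀ x : H, R (S x) = B x := by
    intro x
    obtain ⟨hx, he⟩ := hTRS x
    rw [← he, ← (hRcomm (R x) hx).2, pmap_congr T _ (hRRapp x) (hCd x), hTC x (hCd x)]
  have hSS : S * S = 1 - C := by
    refine ContinuousLinearMap.ext fun x => ?_
    have h1 : S (S x) = x - C x := by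
      obtain ⟨hx, he⟩ := hTRS (S x)
      rw [← he, pmap_congr T _ (hRS x) (hBd x), hTB x (hBd x)]
    simp [ContinuousLinearMap.mul_apply, h1, ContinuousLinearMap.sub_apply]
  -- domain = range R
  have hBT : ∀ ψ : T.domain, B (T ψ : H) = (ψ : H) - C (ψ : H) := by
    intro ψ
    rw [← hTC (T ψ : H) (hCd _), pmap_congr T _ (hBC (ψ:H) ψ.2) (hBd _), hTB (ψ : H) (hBd _)]
  have hdom : (T.domain : Set H) = Set.range R := by
    ext y
    constructor
    · intro hy
      refine ⟨R y + S (T ⟨y, hy⟩ : H), ?_⟩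
      rw [_root_.map_add, hRRapp, hRS, hBT ⟨y, hy⟩]
      abel
    · rintro ⟨x, rfl⟩
      exact (hTRS x).1
  -- pure contraction
  have hSnorm : ∀ x : H, ‖S x‖^2 + ‖R x‖^2 = ‖x‖^2 := by
    have hcf : Continuous fun x : H => ‖S x‖^2 + ‖R x‖^2 :=
      ((S.continuous.norm.pow 2).add (R.continuous.norm.pow 2))
    have hcg : Continuous fun x : H => ‖x‖^2 := continuous_norm.pow 2
    have heq : Set.EqOn (fun x : H => ‖S x‖^2 + ‖R x‖^2) (fun x : H => ‖x‖^2)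
        (T.domain : Set H) := by
      intro a ha
      show ‖S a‖^2 + ‖R a‖^2 = ‖a‖^2
      rw [hSext ⟨a, ha⟩]
      exact hkey ⟨a, ha⟩
    have := Continuous.ext_on hT hcf hcg heq
    exact fun x => congrFun this x
  have hSpure : (∀ x : H, x ≠ 0 → ‖S x‖ < ‖x‖) := by
    intro x hx
    have hRx : R x ≠ 0 := by
      intro hR0'
      apply hx
      have hC0' : C x = 0 := by rw [← hRRapp, hR0', _root_.map_zero]
      have hB0 : B x = 0 := by
        rw [← hTC x (hCd x), pmap_congr T (hCd x) hC0' (zero_mem _)]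
        exact LinearPMap.map_zero T
      have hzz := hTB x (hBd x)
      rw [pmap_congr T (hBd x) hB0 (zero_mem _)] at hzz
      have h0 : (T ⟨(0 : H), zero_mem _⟩ : H) = 0 := LinearPMap.map_zero T
      rw [h0, hC0', sub_zero] at hzz
      exact hzz.symm
    have h1 := hSnorm x
    have h2 : 0 < ‖R x‖ := norm_pos_iff.mpr hRx
    nlinarith [norm_nonneg (S x), norm_nonneg x]
  exact ⟨C, R, S, hCpos, hRpos, hRR, hclause1, fun x => ⟨(hTRS x).1, ((hTRS x).2).symm⟩,
    hSsa, hSpure, hSS, hdom⟩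

lemma pmap_C_unique {T : H →ₗ.[ℂ] H} (hsa : IsSelfAdjoint T) {C C' : H →L[ℂ] H}
    (h : ∀ x : H, ∃ (h1 : C x ∈ T.domain) (h2 : (T ⟨C x, h1⟩ : H) ∈ T.domain),
        C x + T ⟨(T ⟨C x, h1⟩ : H), h2⟩ = x)
    (h' : ∀ x : H, ∃ (h1 : C' x ∈ T.domain) (h2 : (T ⟨C' x, h1⟩ : H) ∈ T.domain),
        C' x + T ⟨(T ⟨C' x, h1⟩ : H), h2⟩ = x) : C' = C := by
  refine ContinuousLinearMap.ext fun x => ?_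
  obtain ⟨h1, h2, he⟩ := h x
  obtain ⟨h1', h2', he'⟩ := h' x
  have hsub := pmap_sub h1' h1
  have hd2 : (T ⟨C' x - C x, sub_mem h1' h1⟩ : H) ∈ T.domain := by
    rw [hsub]; exact sub_mem h2' h2
  have hz : C' x - C x + (T ⟨(T ⟨C' x - C x, sub_mem h1' h1⟩ : H), hd2⟩ : H) = 0 := by
    rw [pmap_congr T hd2 hsub (sub_mem h2' h2), pmap_sub h2' h2]
    calc C' x - C x + ((T ⟨(T ⟨C' x, h1'⟩ : H), h2'⟩ : H) - (T ⟨(T ⟨C x, h1⟩ : H), h2⟩ : H))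
        = (C' x + (T ⟨(T ⟨C' x, h1'⟩ : H), h2'⟩ : H))
          - (C x + (T ⟨(T ⟨C x, h1⟩ : H), h2⟩ : H)) := by abel
      _ = x - x := by rw [he, he']
      _ = 0 := sub_self x
  exact sub_eq_zero.mp (pmap_inj hsa (sub_mem h1' h1) hd2 hz)

lemma bt_unique {T : H →ₗ.[ℂ] H} (hsa : IsSelfAdjoint T) {S1 S2 : H →L[ℂ] H}
    (h1 : IsBoundedTransform T S1) (h2 : IsBoundedTransform T S2) : S1 = S2 := by
  obtain ⟨C1, R1, hC1, hR1, hRR1, hc11, hc12⟩ := h1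
  obtain ⟨C2, R2, hC2, hR2, hRR2, hc21, hc22⟩ := h2
  have hC : C2 = C1 := pmap_C_unique hsa hc11 hc21
  have hR : R1 = R2 := by
    rw [← sqrtCLM_unique ((ContinuousLinearMap.nonneg_iff_isPositive R1).mpr hR1) hRR1,
      ← sqrtCLM_unique ((ContinuousLinearMap.nonneg_iff_isPositive R2).mpr hR2)
        (hRR2.trans hC)]
  refine ContinuousLinearMap.ext fun x => ?_
  obtain ⟨hx1, he1⟩ := hc12 x
  obtain ⟨hx2, he2⟩ := hc22 x
  rw [he1, he2, pmap_congr T hx1 (by rw [hR]) hx2]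

lemma bt_to_inv {T : H →ₗ.[ℂ] H} (hsa : IsSelfAdjoint T) {S : H →L[ℂ] H}
    (hbt : IsBoundedTransform T S) : IsInverseBoundedTransform S T := by
  obtain ⟨C0, R0, S0, hC0, hR0, hRR0, hc1, hc2, hSsa0, hSp0, hSS0, hdom0⟩ := btCore hsa
  have hS : S = S0 := bt_unique hsa hbt ⟨C0, R0, hC0, hR0, hRR0, hc1, hc2⟩
  subst hS
  refine ⟨R0, hR0, by rw [hRR0, hSS0, sub_sub_cancel], hdom0, fun x => ?_⟩
  exact ⟨(hc2 x).choose, ((hc2 x).choose_spec).symm⟩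

lemma inv_to_bt {T : H →ₗ.[ℂ] H} {S : H →L[ℂ] H} (hSsa : IsSelfAdjoint S)
    (hinv : IsInverseBoundedTransform S T) : IsBoundedTransform T S := by
  obtain ⟨R, hRpos, hRsq, hdom, hact⟩ := hinv
  have hR0 : (0 : H →L[ℂ] H) ≤ R := (ContinuousLinearMap.nonneg_iff_isPositive R).mpr hRpos
  have hAsa : IsSelfAdjoint (1 - S * S) := by
    have : star (1 - S * S) = 1 - S * S := by rw [star_sub, star_one, star_mul, hSsa.star_eq]
    exact this
  have hcomm : Commute S R := by
    have hscomm : Commute S (1 - S * S) :=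
      (Commute.one_right S).sub_right ((Commute.refl S).mul_right (Commute.refl S))
    have := sqrtCLM_comm hAsa hscomm
    rwa [sqrtCLM_unique hR0 hRsq] at this
  have happ : ∀ v : H, S (R v) = R (S v) := fun v => by
    calc S (R v) = (S * R) v := rfl
      _ = (R * S) v := by rw [hcomm.eq]
      _ = R (S v) := rfl
  have hmemR : ∀ v : H, R v ∈ T.domain := fun v => by
    rw [← SetLike.mem_coe, hdom]; exact ⟨v, rfl⟩
  have hTapp : ∀ (v : H) (h : R v ∈ T.domain), (T ⟨R v, h⟩ : H) = S v :=
    fun v h => (hact v).choose_spec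
  have hCpos : (R * R).IsPositive := by
    refine (ContinuousLinearMap.nonneg_iff_isPositive _).mp ?_
    simpa [hRpos.isSelfAdjoint.star_eq] using star_mul_self_nonneg R
  refine ⟨R * R, R, hCpos, hRpos, rfl, fun x => ?_, fun x => ⟨hmemR x, (hTapp x _).symm⟩⟩
  have e1 : (R * R) x = R (R x) := rfl
  have h1 : (R * R) x ∈ T.domain := by rw [e1]; exact hmemR (R x)
  have he1 : (T ⟨(R * R) x, h1⟩ : H) = S (R x) := by
    rw [pmap_congr T h1 e1 (hmemR (R x))]; exact hTapp (R x) _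
  have he1' : (T ⟨(R * R) x, h1⟩ : H) = R (S x) := by rw [he1, happ x]
  have h2 : (T ⟨(R * R) x, h1⟩ : H) ∈ T.domain := by rw [he1']; exact hmemR (S x)
  refine ⟨h1, h2, ?_⟩
  have he2 : (T ⟨(T ⟨(R * R) x, h1⟩ : H), h2⟩ : H) = S (S x) := by
    rw [pmap_congr T h2 he1' (hmemR (S x))]; exact hTapp (S x) _
  have h3 : (R * R) x = x - S (S x) := by
    rw [hRsq]
    simp [ContinuousLinearMap.sub_apply, ContinuousLinearMap.mul_apply]
  rw [he2, h3]
  abel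

lemma inv_determines {S : H →L[ℂ] H} {T1 T2 : H →ₗ.[ℂ] H}
    (h1 : IsInverseBoundedTransform S T1) (h2 : IsInverseBoundedTransform S T2) : T1 = T2 := by
  obtain ⟨R1, hp1, hs1, hd1, ha1⟩ := h1
  obtain ⟨R2, hp2, hs2, hd2, ha2⟩ := h2
  have hR : R1 = R2 := by
    rw [← sqrtCLM_unique ((ContinuousLinearMap.nonneg_iff_isPositive R1).mpr hp1) hs1,
      ← sqrtCLM_unique ((ContinuousLinearMap.nonneg_iff_isPositive R2).mpr hp2) hs2]
  subst hR
  have hdom : T1.domain = T2.domain := SetLike.coe_injective (hd1.trans hd2.symm)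
  refine LinearPMap.ext hdom ?_
  intro x hx hy
  have hxr : x ∈ Set.range ⇑R1 := by rw [← hd1]; exact hx
  obtain ⟨a, rfl⟩ := hxr
  obtain ⟨m1, e1⟩ := ha1 a
  obtain ⟨m2, e2⟩ := ha2 a
  exact e1.trans e2.symm

lemma inverse_exists {S : H →L[ℂ] H} (hSsa : IsSelfAdjoint S)
    (hSpure : ∀ x : H, x ≠ 0 → ‖S x‖ < ‖x‖) :
    ∃ T : H →ₗ.[ℂ] H, Dense (T.domain : Set H) ∧ IsSelfAdjoint T ∧
      IsInverseBoundedTransform S T := by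
  have hSsym : ∀ x y : H, ⟪S x, y⟫ = ⟪x, S y⟫ :=
    ContinuousLinearMap.isSelfAdjoint_iff_isSymmetric.mp hSsa
  set A : H →L[ℂ] H := 1 - S * S with hAdef
  have hAsa : IsSelfAdjoint A := by
    have : star (1 - S * S) = 1 - S * S := by rw [star_sub, star_one, star_mul, hSsa.star_eq]
    exact this
  have hAexp : ∀ x : H, RCLike.re ⟪A x, x⟫ = ‖x‖^2 - ‖S x‖^2 := by
    intro x
    have e1 : ⟪A x, x⟫ = ⟪x, x⟫ - ⟪S x, S x⟫ := by
      rw [hAdef]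
      simp only [ContinuousLinearMap.sub_apply, ContinuousLinearMap.one_apply,
        ContinuousLinearMap.mul_apply, inner_sub_left]
      congr 1
      rw [hSsym (S x) x]
    rw [e1, _root_.map_sub, inner_self_eq_norm_sq, inner_self_eq_norm_sq]
  have hA0 : (0 : H →L[ℂ] H) ≤ A := by
    refine (ContinuousLinearMap.nonneg_iff_isPositive A).mpr ⟨ContinuousLinearMap.isSelfAdjoint_iff_isSymmetric.mp hAsa, fun x => ?_⟩
    show 0 ≤ RCLike.re ⟪A x, x⟫
    rw [hAexp x]
    rcases eq_or_ne x 0 with rfl | hx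
    · simp
    · nlinarith [hSpure x hx, norm_nonneg (S x), norm_nonneg x]
  set R : H →L[ℂ] H := sqrtCLM A with hRdef
  have hR0 : (0 : H →L[ℂ] H) ≤ R := sqrtCLM_nonneg A
  have hRpos : R.IsPositive := (ContinuousLinearMap.nonneg_iff_isPositive R).mp hR0
  have hRR : R * R = A := sqrtCLM_mul_self A hA0
  have hRRapp : ∀ x : H, R (R x) = A x := fun x => by
    rw [← ContinuousLinearMap.mul_apply, hRR]
  have hRsym : ∀ x y : H, ⟪R x, y⟫ = ⟪x, R y⟫ :=
    ContinuousLinearMap.isSelfAdjoint_iff_isSymmetric.mp hRpos.isSelfAdjoint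
  have hcomm : ∀ v : H, S (R v) = R (S v) := by
    have hscomm : Commute S A :=
      (Commute.one_right S).sub_right ((Commute.refl S).mul_right (Commute.refl S))
    have hc := sqrtCLM_comm hAsa hscomm
    intro v
    calc S (R v) = (S * R) v := rfl
      _ = (R * S) v := by rw [hc.eq]
      _ = R (S v) := rfl
  -- R is injective
  have hRzero : ∀ v : H, R v = 0 → v = 0 := by
    intro v hv
    by_contra hne
    have hAv : A v = 0 := by rw [← hRRapp, hv, _root_.map_zero]
    have h2 : RCLike.re ⟪A v, v⟫ = 0 := by rw [hAv, inner_zero_left]; simp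
    rw [hAexp v] at h2
    nlinarith [hSpure v hne, norm_nonneg (S v), norm_nonneg v]
  have hRinj : Function.Injective ⇑(R : H →ₗ[ℂ] H) := by
    intro a b hab
    have : R (a - b) = 0 := by
      rw [_root_.map_sub]
      rw [sub_eq_zero]
      exact hab
    exact sub_eq_zero.mp (hRzero _ this)
  -- dense range
  have hdense : Dense ((LinearMap.range (R : H →ₗ[ℂ] H) : Submodule ℂ H) : Set H) := by
    rw [Submodule.dense_iff_topologicalClosure_eq_top, Submodule.topologicalClosure_eq_top_iff]
    rw [Submodule.eq_bot_iff]
    intro y hy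
    have h1 : ∀ v : H, ⟪R v, y⟫ = 0 := fun v =>
      (Submodule.mem_orthogonal _ y).mp hy (R v) (LinearMap.mem_range_self _ v)
    have h2 : R y = 0 := by
      refine ext_inner_left ℂ fun v => ?_
      rw [inner_zero_right, ← hRsym]
      exact h1 v
    exact hRzero y h2
  -- the inverse operator
  let e : H ≃ₗ[ℂ] LinearMap.range (R : H →ₗ[ℂ] H) := LinearEquiv.ofInjective _ hRinj
  let T : H →ₗ.[ℂ] H :=
    LinearPMap.mk (LinearMap.range (R : H →ₗ[ℂ] H)) ((S : H →ₗ[ℂ] H) ∘ₗ e.symm.toLinearMap)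
  have hTdom : T.domain = LinearMap.range (R : H →ₗ[ℂ] H) := rfl
  have hmemR : ∀ v : H, R v ∈ T.domain := fun v => LinearMap.mem_range_self _ v
  have hTapp : ∀ (a : H) (h : R a ∈ T.domain), (T ⟨R a, h⟩ : H) = S a := by
    intro a h
    show ((S : H →ₗ[ℂ] H) ∘ₗ e.symm.toLinearMap) ⟨R a, h⟩ = S a
    have he : (⟨R a, h⟩ : T.domain) = e a := Subtype.ext (LinearEquiv.ofInjective_apply _ _).symm
    rw [he]
    simp only [LinearMap.comp_apply, LinearEquiv.coe_coe, LinearEquiv.symm_apply_apply]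
    rfl
  have hTmem_iff : ∀ ψ : T.domain, ∃ a : H, R a = (ψ : H) := by
    rintro ⟨x, a, rfl⟩
    exact ⟨a, rfl⟩
  have hTdense : Dense (T.domain : Set H) := hdense
  -- symmetric
  have hsymT : T.IsFormalAdjoint T := by
    rintro x y
    obtain ⟨a, ha⟩ := hTmem_iff x
    obtain ⟨b, hb⟩ := hTmem_iff y
    have hx' : x = ⟨R a, ha ▸ x.2⟩ := Subtype.ext ha.symm
    have hy' : y = ⟨R b, hb ▸ y.2⟩ := Subtype.ext hb.symm
    rw [hx', hy', hTapp a _, hTapp b _]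
    show ⟪S a, R b⟫ = ⟪R a, S b⟫
    calc ⟪S a, R b⟫ = ⟪R (S a), b⟫ := by rw [hRsym]
      _ = ⟪S (R a), b⟫ := by rw [hcomm]
      _ = ⟪R a, S b⟫ := hSsym (R a) b
  have hle1 : T ≤ T.adjoint := hsymT.le_adjoint hTdense
  have hle2 : T.adjoint ≤ T := by
    have hfa := LinearPMap.adjoint_isFormalAdjoint (T := T) hTdense
    have hmain : ∀ y (hy : y ∈ T.adjoint.domain), ∃ hym : y ∈ T.domain,
        (T ⟨y, hym⟩ : H) = T.adjoint ⟨y, hy⟩ := by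
      intro y hy
      set z : H := T.adjoint ⟨y, hy⟩ with hz
      have hkey : ∀ a : H, ⟪z, R a⟫ = ⟪y, S a⟫ := by
        intro a
        have := hfa ⟨y, hy⟩ ⟨R a, hmemR a⟩
        rw [hTapp a (hmemR a)] at this
        exact this
      have hRz : R z = S y := by
        refine ext_inner_right ℂ fun a => ?_
        rw [hRsym z a, hkey a, hSsym y a]
      have hyrep : R (R y + S z) = y := by
        rw [_root_.map_add, hRRapp]
        have e1 : R (S z) = S (R z) := (hcomm z).symm
        rw [e1, hRz]
        have e2 : A y = y - S (S y) := by
          simp [hAdef, ContinuousLinearMap.sub_apply, ContinuousLinearMap.mul_apply]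
        rw [e2]
        abel
      have hym : y ∈ T.domain := by rw [← hyrep]; exact hmemR _
      refine ⟨hym, ?_⟩
      have hval : (T ⟨y, hym⟩ : H) = S (R y + S z) := by
        rw [pmap_congr T hym hyrep.symm (hmemR _)]
        exact hTapp _ _
      rw [hval, _root_.map_add]
      have e1 : S (R y) = R (S y) := hcomm y
      rw [e1, ← hRz, hRRapp]
      have e2 : A z = z - S (S z) := by
        simp [hAdef, ContinuousLinearMap.sub_apply, ContinuousLinearMap.mul_apply]
      rw [e2]
      abel
    refine ⟨fun y hy => (hmain y hy).choose, ?_⟩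
    rintro ⟨y, hy⟩ ⟨y2, hy2⟩ heq
    have hyy : y = y2 := heq
    subst hyy
    exact ((hmain y hy).choose_spec).symm
  have hTsa : IsSelfAdjoint T := LinearPMap.isSelfAdjoint_def.mpr (le_antisymm hle2 hle1)
  refine ⟨T, hTdense, hTsa, R, hRpos, hRR, ?_, fun x => ⟨hmemR x, hTapp x _⟩⟩
  show ((LinearMap.range (R : H →ₗ[ℂ] H) : Submodule ℂ H) : Set H) = Set.range ⇑R
  rw [LinearMap.coe_range]
  rfl


/-- The bounded transform `T ↦ S = T(I + T²)^{-1/2}` is a bijective correspondence between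
densely defined self-adjoint operators `T` on `H` and self-adjoint pure contractions `S` on
`H`, with inverse `S ↦ T = S(I - S²)^{-1/2}`. -/
theorem boundedTransform_bijective_correspondence :
    (∀ T : H →ₗ.[ℂ] H, Dense (T.domain : Set H) → IsSelfAdjoint T →
      ∃! S : H →L[ℂ] H, IsSelfAdjoint S ∧ PureContraction S ∧ IsBoundedTransform T S) ∧
    (∀ S : H →L[ℂ] H, IsSelfAdjoint S → PureContraction S →
      ∃! T : H →ₗ.[ℂ] H, Dense (T.domain : Set H) ∧ IsSelfAdjoint T ∧
        IsBoundedTransform T S) ∧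
    (∀ (T : H →ₗ.[ℂ] H) (S : H →L[ℂ] H), Dense (T.domain : Set H) → IsSelfAdjoint T →
      IsSelfAdjoint S → PureContraction S →
      (IsBoundedTransform T S ↔ IsInverseBoundedTransform S T)) := by
  refine ⟨?_, ?_, ?_⟩
  · intro T _hTd hTsa
    obtain ⟨C0, R0, S0, hC0, hR0, hRR0, hc1, hc2, hSsa0, hSp0, hSS0, hdom0⟩ := btCore hTsa
    refine ⟨S0, ⟨hSsa0, hSp0, C0, R0, hC0, hR0, hRR0, hc1, hc2⟩, ?_⟩
    rintro S' ⟨_hsa', _hp', hbt'⟩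
    exact bt_unique hTsa hbt' ⟨C0, R0, hC0, hR0, hRR0, hc1, hc2⟩
  · intro S hSsa hSpure
    obtain ⟨T, hTd, hTsa, hinv⟩ := inverse_exists hSsa hSpure
    refine ⟨T, ⟨hTd, hTsa, inv_to_bt hSsa hinv⟩, ?_⟩
    rintro T' ⟨_hTd', hTsa', hbt'⟩
    exact inv_determines (bt_to_inv hTsa' hbt') hinv
  · intro T S _ hTsa hSsa _
    exact ⟨fun h => bt_to_inv hTsa h, fun h => inv_to_bt hSsa h⟩
end
end

section
/- Let T be a densely defined self-adjoint operator on a complex Hilbert space H with bounded transform S = T(I + T²)^{-1/2}. Then T is bounded if and only if σ(S) ⊆ (-1,1); equivalently, T is unbounded if and only if 1 ∈ σ(S) or -1 ∈ σ(S). -/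
noncomputable section
set_option synthInstance.maxHeartbeats 1000000
set_option maxHeartbeats 1000000
open scoped InnerProductSpace


variable {H : Type*} [NormedAddCommGroup H] [InnerProductSpace ℂ H] [CompleteSpace H]

private lemma commute_of_mem_elemental {a b x : H →L[ℂ] H}
    (hab : Commute b a) (hab' : Commute b (star a))
    (hx : x ∈ StarAlgebra.elemental ℂ a) : Commute b x := by
  have hcl : IsClosed {y : H →L[ℂ] H | b * y = y * b} :=
    isClosed_eq (continuous_const.mul continuous_id) (continuous_id.mul continuous_const)
  have key : ∀ y ∈ StarAlgebra.adjoin ℂ ({a} : Set (H →L[ℂ] H)),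
      b * y = y * b ∧ b * star y = star y * b := by
    intro y hy
    induction hy using StarAlgebra.adjoin_induction with
    | mem z hz =>
      rw [Set.mem_singleton_iff] at hz
      subst hz
      exact ⟨hab, hab'⟩
    | algebraMap r =>
      refine ⟨(Algebra.commutes r b).symm, ?_⟩
      rw [← algebraMap_star_comm]
      exact (Algebra.commutes _ b).symm
    | add u v hu hv h1 h2 =>
      constructor
      · rw [mul_add, add_mul, h1.1, h2.1]
      · rw [star_add, mul_add, add_mul, h1.2, h2.2]
    | mul u v hu hv h1 h2 =>
      constructor
      · rw [← mul_assoc, h1.1, mul_assoc, h2.1, mul_assoc]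
      · rw [star_mul, ← mul_assoc, h2.2, mul_assoc, h1.2, mul_assoc]
    | star u hu h1 =>
      exact ⟨h1.2, by rw [star_star]; exact h1.1⟩
  have hsub : (StarAlgebra.adjoin ℂ ({a} : Set (H →L[ℂ] H)) : Set (H →L[ℂ] H)) ⊆
      {y : H →L[ℂ] H | b * y = y * b} := fun y hy => (key y hy).1
  exact closure_minimal hsub hcl hx

private lemma commute_cfc_complex {a b : H →L[ℂ] H} (ha : IsSelfAdjoint a) (hab : Commute b a)
    (g : ℂ → ℂ) : Commute b (cfc g a) := by
  refine cfc_cases (fun x => Commute b x) a g (Commute.zero_right b) fun hg hn => ?_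
  rw [cfcHom_eq_of_isStarNormal (ha := hn)]
  refine commute_of_mem_elemental hab (by rwa [ha.star_eq]) ?_
  simp only [StarAlgHom.comp_apply, StarSubalgebra.coe_subtype]
  exact SetLike.coe_mem _

private lemma commute_sqrt {b r c : H →L[ℂ] H} (hr : 0 ≤ r) (hrr : r * r = c)
    (hbc : Commute b c) : Commute b r := by
  have hc : 0 ≤ c := by
    rw [← hrr]
    have h := star_mul_self_nonneg r
    rwa [(IsSelfAdjoint.of_nonneg hr).star_eq] at h
  have hsa_c : IsSelfAdjoint c := IsSelfAdjoint.of_nonneg hc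
  have h1 : CFC.sqrt c = r := CFC.sqrt_unique hrr hr
  have h2 : CFC.sqrt c = cfcₙ NNReal.sqrt c := rfl
  rw [← h1, h2, cfcₙ_eq_cfc]
  erw [cfc_nnreal_eq_real _ _ hc, cfc_real_eq_complex _ hsa_c]
  exact commute_cfc_complex hsa_c hbc _

/-- `T` is bounded iff `σ(S) ⊆ (-1,1)`; equivalently, `T` is unbounded iff
`1 ∈ σ(S)` or `-1 ∈ σ(S)`. -/
theorem bounded_iff_spectrum_boundedTransform_subset (T : H →ₗ.[ℂ] H) (S : H →L[ℂ] H)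
    (hdense : Dense (T.domain : Set H)) (hsa : IsSelfAdjoint T)
    (hbt : IsBoundedTransform T S) :
    ((∃ c : ℝ, ∀ ψ : T.domain, ‖T ψ‖ ≤ c * ‖(ψ : H)‖) ↔
      spectrum ℂ S ⊆ Complex.ofReal '' Set.Ioo (-1 : ℝ) 1) ∧
    (¬ (∃ c : ℝ, ∀ ψ : T.domain, ‖T ψ‖ ≤ c * ‖(ψ : H)‖) ↔
      ((1 : ℂ) ∈ spectrum ℂ S ∨ (-1 : ℂ) ∈ spectrum ℂ S)) := by
  classical
  obtain ⟨C, R, hCpos, hRpos, hRR, hdom, hSdef⟩ := hbt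
  choose h1 h2 heq using hdom
  choose hRmem hSeq using hSdef
  by_cases hH : Subsingleton H
  · have hsubop : Subsingleton (H →L[ℂ] H) :=
      ⟨fun f g => ContinuousLinearMap.ext fun x => Subsingleton.elim _ _⟩
    have hspec : spectrum ℂ S = ∅ := by
      ext z
      simp only [Set.mem_empty_iff_false, iff_false]
      intro hz
      exact (spectrum.mem_iff.mp hz) (isUnit_of_subsingleton _)
    have hbdd : ∃ c : ℝ, ∀ ψ : T.domain, ‖T ψ‖ ≤ c * ‖(ψ : H)‖ := by
      refine ⟨0, fun ψ => ?_⟩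
      have hz : (T ψ : H) = 0 := Subsingleton.elim _ _
      simp [hz]
    refine ⟨iff_of_true hbdd (by simp [hspec]), ?_, ?_⟩
    · intro h; exact absurd hbdd h
    · rintro (h | h) <;> simp [hspec] at h
  · rw [not_subsingleton_iff_nontrivial] at hH
    haveI := hH
    have hTadj : T.adjoint = T := LinearPMap.isSelfAdjoint_def.mp hsa
    have hsym : ∀ a b : T.domain, ⟪(T a : H), (b : H)⟫_ℂ = ⟪(a : H), (T b : H)⟫_ℂ := by
      have h := LinearPMap.adjoint_isFormalAdjoint hdense
      rw [hTadj] at h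
      exact h
    have hC_eq : ∀ x : H, C x = R (R x) := by
      intro x
      rw [← hRR]
      rfl
    have hRsym : ∀ x y : H, ⟪R x, y⟫_ℂ = ⟪x, R y⟫_ℂ := fun x y =>
      hRpos.isSelfAdjoint.isSymmetric x y
    have hTC : ∀ x : H, (T ⟨C x, h1 x⟩ : H) = S (R x) := by
      intro x
      have hx : (⟨C x, h1 x⟩ : T.domain) = ⟨R (R x), hRmem (R x)⟩ := Subtype.ext (hC_eq x)
      rw [hx, ← hSeq (R x)]
    have hTTC : ∀ x : H, (T ⟨(T ⟨C x, h1 x⟩ : H), h2 x⟩ : H) = x - C x := fun x =>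
      eq_sub_of_add_eq' (heq x)
    have hRinj : ∀ x : H, R x = 0 → x = 0 := by
      intro x hx
      have hCx : C x = 0 := by rw [hC_eq, hx, map_zero]
      have h0 : (⟨C x, h1 x⟩ : T.domain) = 0 := Subtype.ext (by simpa using hCx)
      have hT1 : (T ⟨C x, h1 x⟩ : H) = 0 := by rw [h0, LinearPMap.map_zero]
      have h0' : (⟨(T ⟨C x, h1 x⟩ : H), h2 x⟩ : T.domain) = 0 := Subtype.ext (by simpa using hT1)
      have hx2 := heq x
      rw [h0', LinearPMap.map_zero] at hx2
      rw [← hx2, hCx]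
      simp
    have hKbot : (LinearMap.range (R : H →ₗ[ℂ] H))ᗮ = ⊥ := by
      rw [Submodule.eq_bot_iff]
      intro v hv
      refine hRinj v ?_
      refine ext_inner_left ℂ fun w => ?_
      rw [inner_zero_right, ← hRsym w v]
      exact (Submodule.mem_orthogonal _ v).mp hv (R w) (LinearMap.mem_range.mpr ⟨w, rfl⟩)
    have hRdense : Dense ((LinearMap.range (R : H →ₗ[ℂ] H) : Submodule ℂ H) : Set H) := by
      apply Submodule.dense_iff_topologicalClosure_eq_top.mpr
      rw [← Submodule.orthogonal_orthogonal_eq_closure, hKbot, Submodule.bot_orthogonal_eq_top]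
    have hextR : ∀ A B : H →L[ℂ] H, (∀ x, A (R x) = B (R x)) → A = B := by
      intro A B hAB
      have heqon : Set.EqOn ⇑A ⇑B ((LinearMap.range (R : H →ₗ[ℂ] H) : Submodule ℂ H) : Set H) := by
        rintro x hx
        obtain ⟨y, rfl⟩ := hx
        exact hAB y
      have h := Continuous.ext_on hRdense A.continuous B.continuous heqon
      exact ContinuousLinearMap.ext fun x => congrFun h x
    have hstar1 : ∀ x y : H, ⟪S x, R y⟫_ℂ = ⟪R x, S y⟫_ℂ := by
      intro x y
      rw [hSeq x, hSeq y]
      exact hsym ⟨R x, hRmem x⟩ ⟨R y, hRmem y⟩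
    have hadjSR : ContinuousLinearMap.adjoint S * R = R * S := by
      ext x
      refine ext_inner_left ℂ fun v => ?_
      calc ⟪v, (ContinuousLinearMap.adjoint S * R) x⟫_ℂ = ⟪S v, R x⟫_ℂ := by
            rw [ContinuousLinearMap.mul_apply, ContinuousLinearMap.adjoint_inner_right]
        _ = ⟪R v, S x⟫_ℂ := hstar1 v x
        _ = ⟪v, (R * S) x⟫_ℂ := by
            rw [ContinuousLinearMap.mul_apply]
            exact hRsym v (S x)
    have hSRsym : ∀ x y : H, ⟪S (R x), y⟫_ℂ = ⟪x, S (R y)⟫_ℂ := by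
      intro x y
      have e1 : ⟪S (R x), C y⟫_ℂ = ⟪C x, (T ⟨C y, h1 y⟩ : H)⟫_ℂ := by
        rw [← hTC x]
        exact hsym ⟨C x, h1 x⟩ ⟨C y, h1 y⟩
      have e2 : ⟪S (R x), (T ⟨(T ⟨C y, h1 y⟩ : H), h2 y⟩ : H)⟫_ℂ
          = ⟪x - C x, (T ⟨C y, h1 y⟩ : H)⟫_ℂ := by
        have h := hsym ⟨(T ⟨C x, h1 x⟩ : H), h2 x⟩ ⟨(T ⟨C y, h1 y⟩ : H), h2 y⟩
        rw [hTTC x] at h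
        rw [← hTC x]
        exact h.symm
      calc ⟪S (R x), y⟫_ℂ
          = ⟪S (R x), C y + (T ⟨(T ⟨C y, h1 y⟩ : H), h2 y⟩ : H)⟫_ℂ := by rw [heq y]
        _ = ⟪C x, (T ⟨C y, h1 y⟩ : H)⟫_ℂ + ⟪x - C x, (T ⟨C y, h1 y⟩ : H)⟫_ℂ := by
            rw [inner_add_right, e1, e2]
        _ = ⟪x, (T ⟨C y, h1 y⟩ : H)⟫_ℂ := by
            rw [← inner_add_left]
            congr 1
            abel
        _ = ⟪x, S (R y)⟫_ℂ := by rw [hTC y]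
    have hSR : S * R = R * ContinuousLinearMap.adjoint S := by
      ext x
      refine ext_inner_left ℂ fun v => ?_
      calc ⟪v, (S * R) x⟫_ℂ = ⟪S (R v), x⟫_ℂ := by
            rw [ContinuousLinearMap.mul_apply]
            exact (hSRsym v x).symm
        _ = ⟪R v, ContinuousLinearMap.adjoint S x⟫_ℂ :=
            (ContinuousLinearMap.adjoint_inner_right S (R v) x).symm
        _ = ⟪v, (R * ContinuousLinearMap.adjoint S) x⟫_ℂ := by
            rw [ContinuousLinearMap.mul_apply]
            exact hRsym v _
    have hD0 : ContinuousLinearMap.adjoint S = S := by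
      set D := S - ContinuousLinearMap.adjoint S with hD
      have hDR : D * R = -(R * D) := by
        rw [hD, sub_mul, mul_sub, hSR, hadjSR]
        abel
      have hDC : Commute D C := by
        show D * C = C * D
        rw [← hRR]
        have h5 : (D * R) * R = R * (R * D) := by
          rw [hDR, neg_mul, mul_assoc, hDR, mul_neg, neg_neg]
        rw [← mul_assoc, h5, ← mul_assoc]
      have hcomm : Commute D R :=
        commute_sqrt ((ContinuousLinearMap.nonneg_iff_isPositive R).mpr hRpos) hRR hDC
      have hRD0 : R * D = 0 := by
        have h6 : R * D = -(R * D) := by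
          conv_lhs => rw [← hcomm.eq]
          exact hDR
        have h7 : (2 : ℝ) • (R * D) = 0 := by
          rw [two_smul]
          nth_rewrite 2 [h6]
          abel
        have := smul_eq_zero.mp h7
        simpa using this
      have hDz : D = 0 := by
        apply hextR
        intro x
        have h8 : D * R = 0 := by rw [hcomm.eq, hRD0]
        calc D (R x) = (D * R) x := rfl
          _ = 0 := by rw [h8]; rfl
          _ = (0 : H →L[ℂ] H) (R x) := rfl
      rw [hD] at hDz
      exact (sub_eq_zero.mp hDz).symm
    have hSsa : IsSelfAdjoint S := ContinuousLinearMap.isSelfAdjoint_iff'.mpr hD0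
    have hSsym : ∀ x y : H, ⟪S x, y⟫_ℂ = ⟪x, S y⟫_ℂ := fun x y => hSsa.isSymmetric x y
    have hpt : ∀ y : H, R y = R (C y) + S (S (R y)) := by
      intro y
      refine ext_inner_left ℂ fun z => ?_
      calc ⟪z, R y⟫_ℂ = ⟪R z, y⟫_ℂ := (hRsym z y).symm
        _ = ⟪R z, C y + (T ⟨(T ⟨C y, h1 y⟩ : H), h2 y⟩ : H)⟫_ℂ := by rw [heq y]
        _ = ⟪R z, C y⟫_ℂ + ⟪R z, (T ⟨(T ⟨C y, h1 y⟩ : H), h2 y⟩ : H)⟫_ℂ :=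
            inner_add_right _ _ _
        _ = ⟪z, R (C y)⟫_ℂ + ⟪S z, S (R y)⟫_ℂ := by
            rw [hRsym z (C y)]
            congr 1
            have h := hsym ⟨R z, hRmem z⟩ ⟨(T ⟨C y, h1 y⟩ : H), h2 y⟩
            have h9 : ((⟨(T ⟨C y, h1 y⟩ : H), h2 y⟩ : T.domain) : H) = S (R y) := hTC y
            rw [← h, ← hSeq z, h9]
        _ = ⟪z, R (C y) + S (S (R y))⟫_ℂ := by
            rw [inner_add_right]
            congr 1
            exact hSsym z (S (R y))
    have hSS : (1 : H →L[ℂ] H) - C = S * S := by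
      apply hextR
      intro x
      have hp := hpt x
      have hCR : C (R x) = R (C x) := by rw [hC_eq (R x), hC_eq x]
      simp only [ContinuousLinearMap.sub_apply, ContinuousLinearMap.one_apply,
        ContinuousLinearMap.mul_apply]
      rw [hCR]
      exact sub_eq_of_eq_add' hp
    have hnorm : ∀ x : H, ‖S x‖ ^ 2 + ‖R x‖ ^ 2 = ‖x‖ ^ 2 := by
      intro x
      have h := congrArg (fun A : H →L[ℂ] H => ⟪x, A x⟫_ℂ) hSS
      simp only [ContinuousLinearMap.sub_apply, ContinuousLinearMap.one_apply,
        ContinuousLinearMap.mul_apply, inner_sub_right] at h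
      have h1' : ⟪x, C x⟫_ℂ = ((‖R x‖ : ℂ)) ^ 2 := by
        rw [hC_eq, ← hRsym x (R x)]
        exact inner_self_eq_norm_sq_to_K (𝕜 := ℂ) (R x)
      have h2' : ⟪x, S (S x)⟫_ℂ = ((‖S x‖ : ℂ)) ^ 2 := by
        rw [← hSsym x (S x)]
        exact inner_self_eq_norm_sq_to_K (𝕜 := ℂ) (S x)
      have h3' : ⟪x, x⟫_ℂ = ((‖x‖ : ℂ)) ^ 2 := inner_self_eq_norm_sq_to_K (𝕜 := ℂ) x
      rw [h1', h2', h3'] at h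
      have h'' : ‖x‖ ^ 2 - ‖R x‖ ^ 2 = ‖S x‖ ^ 2 := by exact_mod_cast h
      linarith
    have hSx_le : ∀ x : H, ‖S x‖ ≤ ‖x‖ := by
      intro x
      have h := hnorm x
      nlinarith [norm_nonneg (S x), norm_nonneg x, sq_nonneg ‖R x‖]
    have hfwd : (∃ c : ℝ, ∀ ψ : T.domain, ‖T ψ‖ ≤ c * ‖(ψ : H)‖) →
        spectrum ℂ S ⊆ Complex.ofReal '' Set.Ioo (-1 : ℝ) 1 := by
      rintro ⟨c, hc⟩ z hz
      set c' := max c 0 with hc'def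
      have hc'0 : 0 ≤ c' := le_max_right c 0
      have hc1 : ∀ x : H, ‖S x‖ ≤ c' * ‖R x‖ := by
        intro x
        rw [hSeq x]
        calc ‖(T ⟨R x, hRmem x⟩ : H)‖ ≤ c * ‖R x‖ := hc ⟨R x, hRmem x⟩
          _ ≤ c' * ‖R x‖ := mul_le_mul_of_nonneg_right (le_max_left c 0) (norm_nonneg _)
      have hb : ∀ x : H, ‖S x‖ ^ 2 * (1 + c' ^ 2) ≤ c' ^ 2 * ‖x‖ ^ 2 := by
        intro x
        have hn2 := hnorm x
        have h3 := hc1 x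
        nlinarith [norm_nonneg (S x), norm_nonneg (R x)]
      have hz_re := hSsa.mem_spectrum_eq_re hz
      set t := Real.sqrt (c' ^ 2 / (1 + c' ^ 2)) with ht_def
      have ht0 : 0 ≤ t := Real.sqrt_nonneg _
      have htsq : t ^ 2 = c' ^ 2 / (1 + c' ^ 2) := Real.sq_sqrt (by positivity)
      have ht1 : t < 1 := by
        have hlt : c' ^ 2 / (1 + c' ^ 2) < 1 := by
          rw [div_lt_one (by positivity)]
          linarith
        nlinarith
      have hSt : ∀ x : H, ‖S x‖ ≤ t * ‖x‖ := by
        intro x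
        have h4 := hb x
        have h5 : ‖S x‖ ^ 2 ≤ (t * ‖x‖) ^ 2 := by
          rw [mul_pow, htsq, div_mul_eq_mul_div, le_div_iff₀ (by positivity)]
          nlinarith
        nlinarith [norm_nonneg (S x), mul_nonneg ht0 (norm_nonneg x)]
      have hzle : ‖z‖ ≤ t :=
        (spectrum.norm_le_norm_of_mem (𝕜 := ℂ) (a := S) hz).trans (ContinuousLinearMap.opNorm_le_bound S ht0 hSt)
      have habs : |z.re| < 1 := by
        have h6 : |z.re| ≤ ‖z‖ := by
          exact Complex.abs_re_le_norm z
        linarith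
      exact ⟨z.re, ⟨(abs_lt.mp habs).1, (abs_lt.mp habs).2⟩, hz_re.symm⟩
    have hbwd : spectrum ℂ S ⊆ Complex.ofReal '' Set.Ioo (-1 : ℝ) 1 →
        (∃ c : ℝ, ∀ ψ : T.domain, ‖T ψ‖ ≤ c * ‖(ψ : H)‖) := by
      intro hspec
      have hCpoly : C = Polynomial.aeval S ((1 : Polynomial ℂ) - Polynomial.X ^ 2) := by
        have h10 : Polynomial.aeval S ((1 : Polynomial ℂ) - Polynomial.X ^ 2) = 1 - S * S := by
          simp only [sq, map_sub, map_one, map_mul, Polynomial.aeval_X]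
        rw [h10, ← hSS]
        abel
      have hmap : spectrum ℂ C
          = (fun k => Polynomial.eval k ((1 : Polynomial ℂ) - Polynomial.X ^ 2)) '' spectrum ℂ S := by
        rw [hCpoly]
        exact spectrum.map_polynomial_aeval S _
      have h0 : (0 : ℂ) ∉ spectrum ℂ C := by
        rw [hmap]
        rintro ⟨z, hz, hz0⟩
        obtain ⟨r, hr, rfl⟩ := hspec hz
        simp only [Polynomial.eval_sub, Polynomial.eval_one, Polynomial.eval_pow,
          Polynomial.eval_X] at hz0
        have hr2 : ((r : ℂ)) ^ 2 = 1 := by linear_combination -hz0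
        have hr2' : r ^ 2 = (1 : ℝ) := by exact_mod_cast hr2
        nlinarith [hr.1, hr.2]
      have hunit : IsUnit C := by
        rw [spectrum.notMem_iff] at h0
        simpa using h0
      obtain ⟨u, hu⟩ := hunit
      set B := ((u⁻¹ : (H →L[ℂ] H)ˣ) : H →L[ℂ] H) with hB
      have hCB : ∀ v : H, C (B v) = v := by
        intro v
        have h5 : C * B = 1 := by rw [← hu, hB]; exact u.mul_inv
        calc C (B v) = (C * B) v := rfl
          _ = v := by rw [h5]; rfl
      refine ⟨‖S‖ * ‖R‖ * ‖B‖, fun ψ => ?_⟩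
      have hψc : (ψ : H) = R (R (B ↑ψ)) := by rw [← hC_eq, hCB]
      have hψeq : ψ = (⟨R (R (B ↑ψ)), hRmem (R (B ↑ψ))⟩ : T.domain) := Subtype.ext hψc
      have hTψ : (T ψ : H) = S (R (B ↑ψ)) := by
        conv_lhs => rw [hψeq]
        exact (hSeq (R (B ↑ψ))).symm
      rw [hTψ]
      conv_rhs => rw [hψc]
      calc ‖S (R (B ↑ψ))‖ ≤ ‖S‖ * ‖R (B ↑ψ)‖ := S.le_opNorm _
        _ ≤ ‖S‖ * (‖R‖ * ‖B ↑ψ‖) :=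
            mul_le_mul_of_nonneg_left (R.le_opNorm _) (norm_nonneg _)
        _ ≤ ‖S‖ * (‖R‖ * (‖B‖ * ‖R (R (B ↑ψ))‖)) := by
            refine mul_le_mul_of_nonneg_left ?_ (norm_nonneg _)
            refine mul_le_mul_of_nonneg_left ?_ (norm_nonneg _)
            rw [← hψc]
            exact B.le_opNorm _
        _ = ‖S‖ * ‖R‖ * ‖B‖ * ‖R (R (B ↑ψ))‖ := by ring
    refine ⟨⟨hfwd, hbwd⟩, ?_, ?_⟩
    · intro hnb
      by_contra hcon
      push_neg at hcon
      obtain ⟨hn1, hn2⟩ := hcon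
      apply hnb
      apply hbwd
      intro z hz
      have hz_re := hSsa.mem_spectrum_eq_re hz
      have hz1 : ‖z‖ ≤ 1 := by
        refine (spectrum.norm_le_norm_of_mem (𝕜 := ℂ) (a := S) hz).trans ?_
        exact ContinuousLinearMap.opNorm_le_bound S zero_le_one
          (fun x => by simpa using hSx_le x)
      have habs : |z.re| ≤ 1 := by
        refine le_trans ?_ hz1
        exact Complex.abs_re_le_norm z
      refine ⟨z.re, ⟨?_, ?_⟩, hz_re.symm⟩
      · rcases lt_or_eq_of_le (neg_le_of_abs_le habs) with h | h
        · exact h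
        · exfalso
          apply hn2
          rw [hz_re, ← h] at hz
          simpa using hz
      · rcases lt_or_eq_of_le (le_of_abs_le habs) with h | h
        · exact h
        · exfalso
          apply hn1
          rw [hz_re, h] at hz
          simpa using hz
    · rintro (h1' | h1') hb
      · obtain ⟨r, hr, hre⟩ := hfwd hb h1'
        have hr1 : r = 1 := by exact_mod_cast hre
        rw [hr1] at hr
        exact lt_irrefl _ hr.2
      · obtain ⟨r, hr, hre⟩ := hfwd hb h1'
        have hr1 : r = -1 := by exact_mod_cast hre
        rw [hr1] at hr
        exact lt_irrefl _ hr.1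
end
end

section
/- Let T be a densely defined self-adjoint operator on a complex Hilbert space H with bounded transform S = T(I + T²)^{-1/2}. The bounded transform preserves point spectra: λ ∈ ℝ is an eigenvalue of T if and only if λ(1 + λ²)^{-1/2} is an eigenvalue of S; moreover every eigenvalue of S lies in (-1,1). -/
noncomputable section

variable {H : Type*} [NormedAddCommGroup H] [InnerProductSpace ℂ H] [CompleteSpace H]

open scoped InnerProductSpace

lemma aux_negeig {R : H →L[ℂ] H} (hR : R.IsPositive) {b : ℝ} (hb : 0 < b) {v : H}
    (hv : R v = ((-b : ℝ) : ℂ) • v) : v = 0 := by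
  have h1 : 0 ≤ RCLike.re ⟪R v, v⟫_ℂ := hR.re_inner_nonneg_left v
  rw [hv, inner_smul_left] at h1
  simp only [Complex.conj_ofReal, inner_self_eq_norm_sq_to_K] at h1
  simp at h1
  have hre : (((‖v‖:ℂ))^2).re = ‖v‖^2 := by norm_cast
  rw [hre] at h1
  have h2 : ‖v‖^2 ≤ 0 := by
    by_contra hc
    push_neg at hc
    nlinarith
  have : ‖v‖ = 0 := by nlinarith [norm_nonneg v, sq_nonneg ‖v‖]
  simpa using this

lemma aux_sqrt {R : H →L[ℂ] H} (hR : R.IsPositive) {b : ℝ} (hb : 0 < b) {ψ : H}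
    (hv : R (R ψ) = ((b : ℝ) : ℂ) • ψ) : R ψ = ((Real.sqrt b : ℝ) : ℂ) • ψ := by
  set a := Real.sqrt b with ha
  have hapos : 0 < a := Real.sqrt_pos.2 hb
  have ha2 : ((b:ℝ):ℂ) = (a:ℂ) * (a:ℂ) := by
    rw [← Real.mul_self_sqrt hb.le]; push_cast; ring
  have key : R (R ψ - ((a:ℝ):ℂ) • ψ) = ((-a : ℝ) : ℂ) • (R ψ - ((a:ℝ):ℂ) • ψ) := by
    rw [map_sub, map_smul, hv, ha2]
    push_cast
    module
  have h2 := aux_negeig hR hapos key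
  linear_combination (norm := module) h2

lemma aux_uinj {a b : ℝ} (h : a / Real.sqrt (1+a^2) = b / Real.sqrt (1+b^2)) : a = b := by
  have hsa : 0 < Real.sqrt (1+a^2) := Real.sqrt_pos.2 (by positivity)
  have hsb : 0 < Real.sqrt (1+b^2) := Real.sqrt_pos.2 (by positivity)
  have hsq : a^2 / (1+a^2) = b^2 / (1+b^2) := by
    have := congrArg (fun x => x^2) h
    simpa [div_pow, Real.sq_sqrt (by positivity : (0:ℝ) ≤ 1+a^2),
      Real.sq_sqrt (by positivity : (0:ℝ) ≤ 1+b^2)] using this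
  have h2 : a^2 = b^2 := by
    have h1a : (0:ℝ) < 1+a^2 := by positivity
    have h1b : (0:ℝ) < 1+b^2 := by positivity
    field_simp at hsq
    nlinarith
  have h3 : (a-b)*(a+b) = 0 := by nlinarith
  rcases mul_eq_zero.1 h3 with h4 | h4
  · linarith
  · have hba : b = -a := by linarith
    have hsame : Real.sqrt (1+b^2) = Real.sqrt (1+a^2) := by rw [hba]; norm_num
    rw [hsame, hba, neg_div] at h
    have hz : a / Real.sqrt (1+a^2) = 0 := by linarith [h]
    have ha0 : a = 0 := by
      rcases div_eq_zero_iff.mp hz with h5 | h5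
      · exact h5
      · exact absurd h5 (by linarith)
    rw [ha0] at hba ⊢
    simp [hba]

lemma aux_injA {T : H →ₗ.[ℂ] H} (hsym : T.IsFormalAdjoint T) (x : T.domain)
    (hx : (T x : H) ∈ T.domain) (h0 : (x:H) + T ⟨T x, hx⟩ = 0) : (x:H) = 0 := by
  have h1 : ⟪(x:H) + T ⟨T x, hx⟩, (x:H)⟫_ℂ = 0 := by rw [h0]; simp
  rw [inner_add_left] at h1
  have h2 : ⟪(T ⟨T x, hx⟩ : H), (x:H)⟫_ℂ = ⟪(T x : H), (T x : H)⟫_ℂ := by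
    simpa using hsym ⟨T x, hx⟩ x
  rw [h2] at h1
  have h3 : ‖(x:H)‖^2 + ‖(T x : H)‖^2 = 0 := by
    have h4 := congrArg RCLike.re h1
    rw [map_add, map_zero, inner_self_eq_norm_sq, inner_self_eq_norm_sq] at h4
    exact h4
  have : ‖(x:H)‖ = 0 := by nlinarith [norm_nonneg (x:H), norm_nonneg (T x : H), sq_nonneg ‖(x:H)‖, sq_nonneg ‖(T x : H)‖]
  simpa using this

/-- The bounded transform preserves point spectra: a real `λ` is an eigenvalue of `T` iff
`λ(1 + λ²)^{-1/2}` is an eigenvalue of `S`; moreover every eigenvalue of `S` lies in `(-1,1)`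
(in particular it is real). -/
theorem pointSpectrum_boundedTransform (T : H →ₗ.[ℂ] H) (S : H →L[ℂ] H)
    (hdense : Dense (T.domain : Set H)) (hsa : IsSelfAdjoint T)
    (hbt : IsBoundedTransform T S) :
    (∀ lam : ℝ,
      (∃ ψ : T.domain, (ψ : H) ≠ 0 ∧ T ψ = (lam : ℂ) • (ψ : H)) ↔
      (∃ ψ : H, ψ ≠ 0 ∧ S ψ = (((lam / Real.sqrt (1 + lam ^ 2) : ℝ)) : ℂ) • ψ)) ∧
    (∀ μ : ℂ, (∃ ψ : H, ψ ≠ 0 ∧ S ψ = μ • ψ) →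
      ∃ r : ℝ, μ = (r : ℂ) ∧ -1 < r ∧ r < 1) := by
  obtain ⟨C, R, hC, hR, hRR, hCax, hSax⟩ := hbt
  have hTT : T.adjoint = T := hsa
  have hsym : T.IsFormalAdjoint T := by
    have h := LinearPMap.adjoint_isFormalAdjoint hdense (T := T)
    rwa [hTT] at h
  have hRsym : ∀ x y : H, ⟪R x, y⟫_ℂ = ⟪x, R y⟫_ℂ := fun x y =>
    hR.isSelfAdjoint.isSymmetric x y
  have hRRx : ∀ x : H, R (R x) = C x := fun x => by
    rw [← hRR]; rfl
  -- C is injective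
  have hCinj : ∀ x : H, C x = 0 → x = 0 := by
    intro x hx
    obtain ⟨h1, h2, he⟩ := hCax x
    have e1 : (⟨C x, h1⟩ : T.domain) = 0 := Subtype.ext hx
    have e2 : (T ⟨C x, h1⟩ : H) = 0 := by rw [e1, LinearPMap.map_zero]
    have e3 : (⟨(T ⟨C x, h1⟩ : H), h2⟩ : T.domain) = 0 := Subtype.ext e2
    rw [e3, LinearPMap.map_zero] at he
    rw [hx, zero_add] at he
    exact he.symm
  -- commutation CT ⊆ TC
  have hCT : ∀ ψ : T.domain, ∃ h : C (ψ:H) ∈ T.domain,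
      (T ⟨C (ψ:H), h⟩ : H) = C (T ψ) := by
    intro ψ
    obtain ⟨hd1, hd2, he⟩ := hCax (ψ:H)
    obtain ⟨hu1, hu2, heu⟩ := hCax (T ψ)
    refine ⟨hd1, ?_⟩
    have hTv' : (T ⟨(T ⟨C (ψ:H), hd1⟩ : H), hd2⟩ : H) = (ψ:H) - C (ψ:H) :=
      eq_sub_of_add_eq' he
    have hmem1 : (T ⟨(T ⟨C (ψ:H), hd1⟩ : H), hd2⟩ : H) ∈ T.domain := by
      rw [hTv']; exact sub_mem ψ.2 hd1
    set w : T.domain := ⟨C (T ψ), hu1⟩ - ⟨(T ⟨C (ψ:H), hd1⟩ : H), hd2⟩ with hw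
    have hTweq : (T w : H) = (T ⟨C (T ψ), hu1⟩ : H)
        - (T ⟨(T ⟨C (ψ:H), hd1⟩ : H), hd2⟩ : H) := by rw [hw, LinearPMap.map_sub]
    have hTwmem : (T w : H) ∈ T.domain := by
      rw [hTweq]; exact sub_mem hu2 hmem1
    have hkey : (w:H) + (T ⟨(T w : H), hTwmem⟩ : H) = 0 := by
      have e4 : (⟨(T w : H), hTwmem⟩ : T.domain)
          = ⟨(T ⟨C (T ψ), hu1⟩ : H), hu2⟩ - ⟨(T ⟨(T ⟨C (ψ:H), hd1⟩ : H), hd2⟩ : H), hmem1⟩ := by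
        apply Subtype.ext
        simpa using hTweq
      rw [e4, LinearPMap.map_sub]
      have hTu' : (T ⟨(T ⟨C (T ψ), hu1⟩ : H), hu2⟩ : H) = T ψ - C (T ψ) :=
        eq_sub_of_add_eq' heu
      have e5 : (⟨(T ⟨(T ⟨C (ψ:H), hd1⟩ : H), hd2⟩ : H), hmem1⟩ : T.domain)
          = ψ - ⟨C (ψ:H), hd1⟩ := by
        apply Subtype.ext
        simpa using hTv'
      rw [hTu', e5, LinearPMap.map_sub]
      have hwcoe : (w:H) = C (T ψ) - (T ⟨C (ψ:H), hd1⟩ : H) := by rw [hw]; rfl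
      rw [hwcoe]
      abel
    have hw0 := aux_injA hsym w hTwmem hkey
    have hwcoe : (w:H) = C (T ψ) - (T ⟨C (ψ:H), hd1⟩ : H) := by rw [hw]; rfl
    rw [hwcoe] at hw0
    have := sub_eq_zero.mp hw0
    exact this.symm
  -- S ∘ R = T ∘ C
  have hSR : ∀ x : H, ∃ h : C x ∈ T.domain, S (R x) = T ⟨C x, h⟩ := by
    intro x
    obtain ⟨h, hs⟩ := hSax (R x)
    have h' : C x ∈ T.domain := hRRx x ▸ h
    refine ⟨h', ?_⟩
    have e : (⟨R (R x), h⟩ : T.domain) = ⟨C x, h'⟩ := Subtype.ext (hRRx x)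
    rw [e] at hs
    exact hs
  -- range of R is dense
  have hdenseR : Dense (Set.range R : Set H) := by
    have horth : (LinearMap.range (R : H →ₗ[ℂ] H))ᗮ = ⊥ := by
      rw [Submodule.eq_bot_iff]
      intro w hw
      rw [Submodule.mem_orthogonal] at hw
      have h0 := hw (R (R w)) (LinearMap.mem_range.mpr ⟨R w, rfl⟩)
      rw [hRsym (R w) w] at h0
      have hRw : R w = 0 := by
        have := hRsym (R w) w
        rw [← this] at h0
        have h1 : ⟪R (R w), w⟫_ℂ = ⟪R w, R w⟫_ℂ := hRsym (R w) w
        rw [h1] at h0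
        exact inner_self_eq_zero.mp h0
      exact hCinj w (by rw [← hRRx w, hRw, map_zero])
    have h2 : (LinearMap.range (R : H →ₗ[ℂ] H)).topologicalClosure = ⊤ :=
      Submodule.topologicalClosure_eq_top_iff.mpr horth
    have h3 : Dense ((LinearMap.range (R : H →ₗ[ℂ] H) : Submodule ℂ H) : Set H) := by
      rw [← Submodule.dense_iff_topologicalClosure_eq_top] at h2
      exact h2
    exact h3
  -- the fundamental identity
  have hIdent : ∀ x w : H, ⟪S x, S w⟫_ℂ + ⟪C x, w⟫_ℂ = ⟪x, w⟫_ℂ := by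
    intro x
    have heq : ∀ z : H, ⟪S x, S (R z)⟫_ℂ + ⟪C x, R z⟫_ℂ = ⟪x, R z⟫_ℂ := by
      intro z
      obtain ⟨hz1, hz2, hez⟩ := hCax z
      obtain ⟨hx1, hsx⟩ := hSax x
      obtain ⟨hcz, hsrz⟩ := hSR z
      have hTTCz : (T ⟨(T ⟨C z, hz1⟩ : H), hz2⟩ : H) = z - C z := eq_sub_of_add_eq' hez
      have e1 : ⟪S x, S (R z)⟫_ℂ = ⟪R x, z - C z⟫_ℂ := by
        rw [hsx, hsrz]
        have e0 : (T ⟨C z, hcz⟩ : H) = (T ⟨C z, hz1⟩ : H) := rfl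
        rw [e0]
        have h5 := hsym ⟨R x, hx1⟩ ⟨(T ⟨C z, hz1⟩ : H), hz2⟩
        rw [hTTCz] at h5
        exact h5
      have e2 : ⟪C x, R z⟫_ℂ = ⟪R x, C z⟫_ℂ := by
        rw [← hRRx x, hRsym (R x) (R z), hRRx z]
      rw [e1, e2, inner_sub_right, ← hRsym x z]
      ring
    intro w
    have hcont1 : Continuous fun w : H => ⟪S x, S w⟫_ℂ + ⟪C x, w⟫_ℂ :=
      ((continuous_const.inner S.continuous)).add (continuous_const.inner continuous_id)
    have hcont2 : Continuous fun w : H => ⟪x, w⟫_ℂ := continuous_const.inner continuous_id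
    have heqon : Set.EqOn (fun w : H => ⟪S x, S w⟫_ℂ + ⟪C x, w⟫_ℂ)
        (fun w : H => ⟪x, w⟫_ℂ) (Set.range R) := by
      rintro _ ⟨z, rfl⟩
      exact heq z
    have := Continuous.ext_on hdenseR hcont1 hcont2 heqon
    exact congrFun this w
  -- S commutes with C
  have hCS : ∀ x : H, S (C x) = C (S x) := by
    intro x
    obtain ⟨hx1, hsx⟩ := hSax x
    obtain ⟨hcx1, hscx⟩ := hSax (C x)
    obtain ⟨hct, hcteq⟩ := hCT ⟨R x, hx1⟩
    have hRC : R (C x) = C (R x) := by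
      conv_lhs => rw [← hRRx x]
      rw [hRRx (R x)]
    have e : (⟨R (C x), hcx1⟩ : T.domain) = ⟨C (R x), hct⟩ := Subtype.ext hRC
    rw [hscx, e, hcteq, hsx]
  -- the key lemma
  have key : ∀ (μ : ℂ) (ψ : H), ψ ≠ 0 → S ψ = μ • ψ →
      ∃ (ν : ℝ) (hmem : ψ ∈ T.domain),
        μ = ((ν / Real.sqrt (1 + ν^2) : ℝ) : ℂ) ∧ (T ⟨ψ, hmem⟩ : H) = (ν:ℂ) • ψ := by
    intro μ ψ hne hS
    set βr : ℝ := 1 - ‖μ‖^2 with hβ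
    have hid : ∀ x w : H, S x = μ • x → S w = μ • w →
        ⟪C x, w⟫_ℂ = (βr:ℂ) * ⟪x, w⟫_ℂ := by
      intro x w hx hw
      have hI := hIdent x w
      rw [hx, hw, inner_smul_left, inner_smul_right] at hI
      have hmc : (starRingEnd ℂ) μ * μ = ((‖μ‖ : ℂ))^2 := RCLike.conj_mul μ
      rw [hβ]
      push_cast
      linear_combination hI - ⟪x, w⟫_ℂ * hmc
    have hv : C ψ = (βr : ℂ) • ψ := by
      have hSv : S (C ψ - (βr:ℂ) • ψ) = μ • (C ψ - (βr:ℂ) • ψ) := by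
        rw [map_sub, map_smul, hCS, hS, map_smul, smul_sub, smul_comm]
      have h1 : ⟪C ψ, C ψ - (βr:ℂ) • ψ⟫_ℂ = (βr:ℂ) * ⟪ψ, C ψ - (βr:ℂ) • ψ⟫_ℂ :=
        hid ψ (C ψ - (βr:ℂ) • ψ) hS hSv
      have h2 : ⟪C ψ - (βr:ℂ) • ψ, C ψ - (βr:ℂ) • ψ⟫_ℂ = 0 := by
        rw [inner_sub_left, h1, inner_smul_left, Complex.conj_ofReal]
        ring
      have h3 := inner_self_eq_zero.mp h2
      exact sub_eq_zero.mp h3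
    have hβpos : 0 < βr := by
      have h0 : 0 ≤ RCLike.re ⟪C ψ, ψ⟫_ℂ := hC.re_inner_nonneg_left ψ
      rw [hv, inner_smul_left, Complex.conj_ofReal, inner_self_eq_norm_sq_to_K] at h0
      simp at h0
      have hre : (((‖ψ‖:ℂ))^2).re = ‖ψ‖^2 := by norm_cast
      have hψpos : 0 < ‖ψ‖ := norm_pos_iff.mpr hne
      rw [hre] at h0
      have hβnn : 0 ≤ βr := by
        by_contra hcon
        push_neg at hcon
        have := mul_neg_of_neg_of_pos hcon (pow_pos hψpos 2)
        linarith
      rcases lt_or_eq_of_le hβnn with h | h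
      · exact h
      · exfalso
        apply hne
        apply hCinj
        rw [hv, ← h]
        simp
    have hRψ : R ψ = ((Real.sqrt βr : ℝ):ℂ) • ψ := aux_sqrt hR hβpos (by rw [hRRx, hv])
    obtain ⟨hmemR, hsψ⟩ := hSax ψ
    have hapos : 0 < Real.sqrt βr := Real.sqrt_pos.2 hβpos
    have hane : ((Real.sqrt βr : ℝ):ℂ) ≠ 0 := by exact_mod_cast hapos.ne'
    have hmemψ : ψ ∈ T.domain := by
      have hre : ψ = (((Real.sqrt βr : ℝ):ℂ))⁻¹ • R ψ := by
        rw [hRψ, smul_smul, inv_mul_cancel₀ hane, one_smul]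
      rw [hre]
      exact Submodule.smul_mem _ _ hmemR
    have hTψ : (T ⟨ψ, hmemψ⟩ : H) = ((((Real.sqrt βr : ℝ):ℂ))⁻¹ * μ) • ψ := by
      have e : (⟨R ψ, hmemR⟩ : T.domain) = ((Real.sqrt βr : ℝ):ℂ) • ⟨ψ, hmemψ⟩ := by
        apply Subtype.ext
        simpa using hRψ
      rw [e, LinearPMap.map_smul, hS] at hsψ
      have := congrArg (fun y => (((Real.sqrt βr : ℝ):ℂ))⁻¹ • y) hsψ
      simp only [smul_smul, inv_mul_cancel₀ hane, one_smul] at this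
      exact this.symm
    have hcreal : (starRingEnd ℂ) ((((Real.sqrt βr : ℝ):ℂ))⁻¹ * μ)
        = (((Real.sqrt βr : ℝ):ℂ))⁻¹ * μ := by
      have h1 := hsym ⟨ψ, hmemψ⟩ ⟨ψ, hmemψ⟩
      simp only [hTψ] at h1
      rw [inner_smul_left, inner_smul_right] at h1
      have hinn : ⟪ψ, ψ⟫_ℂ ≠ 0 := inner_self_ne_zero.mpr hne
      exact mul_right_cancel₀ hinn h1
    set ν : ℝ := ((((Real.sqrt βr : ℝ):ℂ))⁻¹ * μ).re with hν
    have hcν : ((((Real.sqrt βr : ℝ):ℂ))⁻¹ * μ) = (ν:ℂ) :=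
      (Complex.conj_eq_iff_re.mp hcreal).symm
    have hμ : μ = ((Real.sqrt βr * ν : ℝ):ℂ) := by
      have := congrArg (fun y => ((Real.sqrt βr : ℝ):ℂ) * y) hcν
      rw [← mul_assoc, mul_inv_cancel₀ hane, one_mul] at this
      rw [this]
      push_cast
      ring
    have hnorm : ‖μ‖^2 = βr * ν^2 := by
      have hnr : ‖((Real.sqrt βr * ν : ℝ):ℂ)‖^2 = (Real.sqrt βr * ν)^2 := by
        rw [Complex.norm_real, Real.norm_eq_abs, sq_abs]
      rw [hμ, hnr, mul_pow]
      try rw [Real.sq_sqrt hβpos.le]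
    have hβprod : βr * (1 + ν^2) = 1 := by
      have hb2 : βr = 1 - βr * ν^2 := by rw [← hnorm]
      nlinarith [hb2]
    have hβval : βr = (1 + ν^2)⁻¹ := eq_inv_of_mul_eq_one_left hβprod
    refine ⟨ν, hmemψ, ?_, ?_⟩
    · rw [hμ]
      norm_cast
      rw [hβval, Real.sqrt_inv]
      field_simp
    · rw [hTψ, hcν]
  refine ⟨?_, ?_⟩
  · intro lam
    constructor
    · rintro ⟨ψ, hne, hT⟩
      obtain ⟨h1, h2, he⟩ := hCax (ψ:H)
      set k : ℂ := ((1 + lam^2 : ℝ) : ℂ) with hk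
      have hkpos : (0:ℝ) < 1 + lam^2 := by positivity
      have hkne : k ≠ 0 := by
        rw [hk]
        exact_mod_cast hkpos.ne'
      have hTψmem : ((lam:ℂ) • (ψ:H)) ∈ T.domain := Submodule.smul_mem _ _ ψ.2
      set w : T.domain := ψ - k • ⟨C (ψ:H), h1⟩ with hw
      have hTw : (T w : H) = (lam:ℂ) • (ψ:H) - k • (T ⟨C (ψ:H), h1⟩ : H) := by
        rw [hw, LinearPMap.map_sub, LinearPMap.map_smul, hT]
      have hTwmem : (T w : H) ∈ T.domain := by
        rw [hTw]
        exact sub_mem hTψmem (Submodule.smul_mem _ _ h2)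
      have hkey : (w:H) + (T ⟨(T w : H), hTwmem⟩ : H) = 0 := by
        have e : (⟨(T w : H), hTwmem⟩ : T.domain)
            = (lam:ℂ) • ⟨(ψ:H), ψ.2⟩ - k • ⟨(T ⟨C (ψ:H), h1⟩ : H), h2⟩ := by
          apply Subtype.ext
          simpa using hTw
        rw [e, LinearPMap.map_sub, LinearPMap.map_smul, LinearPMap.map_smul]
        have eψ : (⟨(ψ:H), ψ.2⟩ : T.domain) = ψ := rfl
        rw [eψ, hT]
        have hTcd' : (T ⟨(T ⟨C (ψ:H), h1⟩ : H), h2⟩ : H) = (ψ:H) - C (ψ:H) :=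
          eq_sub_of_add_eq' he
        rw [hTcd']
        have hwc : (w:H) = (ψ:H) - k • C (ψ:H) := by rw [hw]; rfl
        rw [hwc]
        have hkval : (lam:ℂ) * (lam:ℂ) + 1 = k := by rw [hk]; push_cast; ring
        match_scalars
        · linear_combination hkval
        · ring
      have hw0 := aux_injA hsym w hTwmem hkey
      have hwc : (w:H) = (ψ:H) - k • C (ψ:H) := by rw [hw]; rfl
      rw [hwc] at hw0
      have hψeq : (ψ:H) = k • C (ψ:H) := sub_eq_zero.mp hw0
      have hCψ : C (ψ:H) = k⁻¹ • (ψ:H) := by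
        have h6 := congrArg (fun y => k⁻¹ • y) hψeq
        simp only [smul_smul, inv_mul_cancel₀ hkne, one_smul] at h6
        exact h6.symm
      have hbpos : (0:ℝ) < (1+lam^2)⁻¹ := by positivity
      have hR2 : R (R (ψ:H)) = ((((1+lam^2)⁻¹ : ℝ)):ℂ) • (ψ:H) := by
        rw [hRRx, hCψ, hk]
        norm_cast
      have hRψ := aux_sqrt hR hbpos hR2
      obtain ⟨hmemR, hsψ⟩ := hSax (ψ:H)
      have e2 : (⟨R (ψ:H), hmemR⟩ : T.domain)
          = ((Real.sqrt ((1+lam^2)⁻¹) : ℝ):ℂ) • ψ := by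
        apply Subtype.ext
        simpa using hRψ
      rw [e2, LinearPMap.map_smul, hT, smul_smul] at hsψ
      refine ⟨(ψ:H), hne, ?_⟩
      rw [hsψ]
      congr 1
      rw [Real.sqrt_inv]
      push_cast
      rw [div_eq_mul_inv]
      ring
    · rintro ⟨ψ, hne, hSψ⟩
      obtain ⟨ν, hmem, hμeq, hTeq⟩ := key _ ψ hne hSψ
      have hre : (lam / Real.sqrt (1+lam^2) : ℝ) = (ν / Real.sqrt (1+ν^2) : ℝ) := by
        exact_mod_cast hμeq
      have hνlam : lam = ν := aux_uinj hre
      refine ⟨⟨ψ, hmem⟩, by simpa using hne, ?_⟩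
      show (T ⟨ψ, hmem⟩ : H) = (lam:ℂ) • ψ
      rw [hTeq, hνlam]
  · rintro μ ⟨ψ, hne, hSψ⟩
    obtain ⟨ν, hmem, hμeq, _⟩ := key μ ψ hne hSψ
    refine ⟨ν / Real.sqrt (1+ν^2), hμeq, ?_, ?_⟩
    all_goals {
      have hs : 0 < Real.sqrt (1+ν^2) := Real.sqrt_pos.2 (by positivity)
      have habs : |ν| < Real.sqrt (1+ν^2) := by
        rw [← Real.sqrt_sq_eq_abs]
        exact Real.sqrt_lt_sqrt (sq_nonneg ν) (by linarith)
      have h2 : |ν / Real.sqrt (1+ν^2)| < 1 := by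
        rw [abs_div, abs_of_pos hs, div_lt_one hs]
        exact habs
      have := abs_lt.mp h2
      first
        | linarith [this.1]
        | linarith [this.2]
    }
end
end

section
/- Let T be a densely defined self-adjoint operator on a complex Hilbert space H with bounded transform S = T(I + T²)^{-1/2}, and let A ⊆ B(H) be a von Neumann algebra. Then T is affiliated with A if and only if S ∈ A. -/
noncomputable section

variable {H : Type*} [NormedAddCommGroup H] [InnerProductSpace ℂ H] [CompleteSpace H]

set_option maxHeartbeats 2000000
set_option synthInstance.maxHeartbeats 1000000

section Aux
private lemma commute_cfcHom_real {A : Type*} [CStarAlgebra A] {a X : A} (ha : IsSelfAdjoint a)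
    (h : Commute X a) (g : C(spectrum ℝ a, ℝ)) : Commute X (cfcHom ha g) := by
  have hcont : Continuous (cfcHom ha (R := ℝ)) := (cfcHom_isClosedEmbedding ha).continuous
  induction g using ContinuousMap.induction_on_of_compact with
  | const r =>
    have hh : (ContinuousMap.const (spectrum ℝ a) r) = algebraMap ℝ C(spectrum ℝ a, ℝ) r := rfl
    rw [hh, AlgHomClass.commutes]
    exact (Algebra.commutes r X).symm
  | id => rw [cfcHom_id ha]; exact h
  | star_id => rw [star_trivial, cfcHom_id ha]; exact h
  | add f g hf hg => rw [map_add]; exact hf.add_right hg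
  | mul f g hf hg => rw [map_mul]; exact hf.mul_right hg
  | frequently f hf =>
    have hcl : IsClosed {g : C(spectrum ℝ a, ℝ) | Commute X (cfcHom ha g)} :=
      isClosed_eq ((continuous_mul_left X).comp hcont) ((continuous_mul_right X).comp hcont)
    exact hcl.closure_subset (mem_closure_iff_frequently.mpr hf)

private lemma commute_cfc_real {A : Type*} [CStarAlgebra A] {a X : A}
    (h : Commute X a) (f : ℝ → ℝ) : Commute X (cfc f a) := by
  refine cfc_cases (fun y => Commute X y) a f (Commute.zero_right X) fun hf ha => ?_
  exact commute_cfcHom_real ha h _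

private lemma commute_sqrt_s14 {C R₀ X : H →L[ℂ] H} (hCpos : C.IsPositive)
    (hRpos : R₀.IsPositive) (hRR : R₀ * R₀ = C) (h : Commute X C) : Commute X R₀ := by
  have hC0 : (0 : H →L[ℂ] H) ≤ C := (ContinuousLinearMap.nonneg_iff_isPositive C).mpr hCpos
  have hR0 : (0 : H →L[ℂ] H) ≤ R₀ := (ContinuousLinearMap.nonneg_iff_isPositive R₀).mpr hRpos
  have hs : ∀ x ∈ spectrum ℝ C, (0:ℝ) ≤ x := fun x hx => spectrum_nonneg_of_nonneg hC0 hx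
  have hQ0 : 0 ≤ cfc Real.sqrt C := cfc_nonneg fun x _ => Real.sqrt_nonneg x
  have hQQ : cfc Real.sqrt C * cfc Real.sqrt C = C := by
    rw [← cfc_mul Real.sqrt Real.sqrt C]
    calc cfc (fun x => Real.sqrt x * Real.sqrt x) C = cfc (fun x : ℝ => x) C :=
          cfc_congr fun x hx => Real.mul_self_sqrt (hs x hx)
      _ = C := cfc_id ℝ C
  have h1 : CFC.sqrt C = R₀ := CFC.sqrt_unique hRR hR0
  have h2 : CFC.sqrt C = cfc Real.sqrt C := CFC.sqrt_unique hQQ hQ0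
  rw [← h1, h2]
  exact commute_cfc_real h Real.sqrt
end Aux

local notation "⟪" x ", " y "⟫" => @inner ℂ _ _ x y

/-- `T` is affiliated with a von Neumann algebra `A` iff its bounded transform `S`
belongs to `A`. -/
theorem affiliated_iff_boundedTransform_mem (T : H →ₗ.[ℂ] H) (S : H →L[ℂ] H)
    (hdense : Dense (T.domain : Set H)) (hsa : IsSelfAdjoint T)
    (hbt : IsBoundedTransform T S) (A : VonNeumannAlgebra H) :
    (∀ R ∈ Set.centralizer (A : Set (H →L[ℂ] H)), CommutesPMap T R) ↔ S ∈ A := by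
  classical
  obtain ⟨C, R₀, hCpos, hRpos, hRR, hCprop, hSprop⟩ := hbt
  choose hCmem hC2mem hCeq using hCprop
  choose hRmem hSeq using hSprop
  -- symmetry of T
  have hfa : T.IsFormalAdjoint T := by
    have h' : T.adjoint = T := hsa
    have h2 := LinearPMap.adjoint_isFormalAdjoint hdense (T := T)
    rwa [h'] at h2
  have hsymm : ∀ x y : T.domain, ⟪(T x : H), (y : H)⟫ = ⟪(x : H), (T y : H)⟫ :=
    fun x y => hfa x y
  -- symmetry of C and R₀
  have symC : ∀ x y : H, ⟪C x, y⟫ = ⟪x, C y⟫ := fun x y =>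
    (ContinuousLinearMap.isSelfAdjoint_iff_isSymmetric.mp hCpos.isSelfAdjoint) x y
  have symR : ∀ x y : H, ⟪R₀ x, y⟫ = ⟪x, R₀ y⟫ := fun x y =>
    (ContinuousLinearMap.isSelfAdjoint_iff_isSymmetric.mp hRpos.isSelfAdjoint) x y
  have hCx : ∀ x : H, C x = R₀ (R₀ x) := fun x => by rw [← hRR]; rfl
  -- injectivity of 1 + T²
  have hTTinj : ∀ (u : T.domain) (hu : (T u : H) ∈ T.domain),
      (u : H) + (T ⟨(T u : H), hu⟩ : H) = 0 → (u : H) = 0 := by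
    intro u hu hequ
    have h0 : ⟪(u : H) + (T ⟨(T u : H), hu⟩ : H), (u : H)⟫ = 0 := by
      rw [hequ, inner_zero_left]
    rw [inner_add_left] at h0
    have h2 : ⟪(T ⟨(T u : H), hu⟩ : H), (u : H)⟫ = ⟪(T u : H), (T u : H)⟫ :=
      hsymm ⟨(T u : H), hu⟩ u
    rw [h2, inner_self_eq_norm_sq_to_K, inner_self_eq_norm_sq_to_K] at h0
    have h3 : (‖(u : H)‖ ^ 2 + ‖(T u : H)‖ ^ 2 : ℝ) = 0 := by
      have h3' : ((‖(u : H)‖ ^ 2 + ‖(T u : H)‖ ^ 2 : ℝ) : ℂ) = 0 := by push_cast; exact h0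
      exact_mod_cast h3'
    have hn : ‖(u : H)‖ = 0 := by nlinarith [sq_nonneg ‖(u : H)‖, sq_nonneg ‖(T u : H)‖]
    simpa using hn
  have huniq : ∀ (x y : T.domain) (hx : (T x : H) ∈ T.domain) (hy : (T y : H) ∈ T.domain),
      (x : H) + (T ⟨(T x : H), hx⟩ : H) = (y : H) + (T ⟨(T y : H), hy⟩ : H) →
      (x : H) = (y : H) := by
    intro x y hx hy hxy
    have hmemsub : (T (x - y) : H) ∈ T.domain := by
      rw [T.map_sub]; exact Submodule.sub_mem _ hx hy
    have hsub : (⟨(T (x - y) : H), hmemsub⟩ : T.domain)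
        = ⟨(T x : H), hx⟩ - ⟨(T y : H), hy⟩ := by
      apply Subtype.ext
      simp [T.map_sub]
    have key : ((x - y : T.domain) : H) + (T ⟨(T (x - y) : H), hmemsub⟩ : H) = 0 := by
      rw [hsub, T.map_sub]
      push_cast
      have habel : (x : H) - (y : H) + ((T ⟨(T x : H), hx⟩ : H) - (T ⟨(T y : H), hy⟩ : H))
          = ((x : H) + (T ⟨(T x : H), hx⟩ : H)) - ((y : H) + (T ⟨(T y : H), hy⟩ : H)) := by
        abel
      rw [habel, hxy, sub_self]
    have h0 := hTTinj (x - y) hmemsub key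
    have h1 : (x : H) - (y : H) = 0 := by
      rwa [Submodule.coe_sub] at h0
    exact sub_eq_zero.mp h1
  constructor
  · -- affiliated → S ∈ A
    intro haff
    rw [← SetLike.mem_coe, ← A.centralizer_centralizer]
    refine Set.mem_centralizer_iff.mpr fun R hRmemc => ?_
    choose hmem1 heq1 using haff R hRmemc
    have step1 : ∀ x : H, R (C x) = C (R x) := by
      intro x
      have m1 : R (C x) ∈ T.domain := hmem1 ⟨C x, hCmem x⟩
      have n1 : (T ⟨R (C x), m1⟩ : H) ∈ T.domain := by
        rw [heq1 ⟨C x, hCmem x⟩]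
        exact hmem1 ⟨(T ⟨C x, hCmem x⟩ : H), hC2mem x⟩
      have key1 : (T ⟨(T ⟨R (C x), m1⟩ : H), n1⟩ : H)
          = R (T ⟨(T ⟨C x, hCmem x⟩ : H), hC2mem x⟩) := by
        have e : (⟨(T ⟨R (C x), m1⟩ : H), n1⟩ : T.domain)
            = ⟨R ((T ⟨C x, hCmem x⟩ : H)), hmem1 ⟨(T ⟨C x, hCmem x⟩ : H), hC2mem x⟩⟩ :=
          Subtype.ext (heq1 ⟨C x, hCmem x⟩)
        rw [congrArg (fun z => (T z : H)) e]
        exact heq1 ⟨(T ⟨C x, hCmem x⟩ : H), hC2mem x⟩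
      have sum1 : R (C x) + (T ⟨(T ⟨R (C x), m1⟩ : H), n1⟩ : H) = R x := by
        rw [key1, ← map_add, hCeq x]
      have sum2 : C (R x)
          + (T ⟨(T ⟨C (R x), hCmem (R x)⟩ : H), hC2mem (R x)⟩ : H) = R x := hCeq (R x)
      exact huniq ⟨R (C x), m1⟩ ⟨C (R x), hCmem (R x)⟩ n1 (hC2mem (R x))
        (sum1.trans sum2.symm)
    have hRCcomm : Commute R C := by
      ext x; simpa [ContinuousLinearMap.mul_apply] using step1 x
    have hRR₀ : Commute R R₀ := commute_sqrt_s14 hCpos hRpos hRR hRCcomm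
    have hRR₀x : ∀ x : H, R (R₀ x) = R₀ (R x) := by
      intro x
      have := DFunLike.congr_fun hRR₀.eq x
      simpa [ContinuousLinearMap.mul_apply] using this
    ext x
    show R (S x) = S (R x)
    calc R (S x) = R (T ⟨R₀ x, hRmem x⟩) := by rw [hSeq x]
      _ = (T ⟨R (R₀ x), hmem1 ⟨R₀ x, hRmem x⟩⟩ : H) := (heq1 ⟨R₀ x, hRmem x⟩).symm
      _ = (T ⟨R₀ (R x), hRmem (R x)⟩ : H) :=
          congrArg (fun z => (T z : H)) (Subtype.ext (hRR₀x x))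
      _ = S (R x) := (hSeq (R x)).symm
  · -- S ∈ A → affiliated
    intro hSA
    -- global consequences of hbt + hsa
    have lemA : ∀ u : T.domain, (T ⟨C (u : H), hCmem (u : H)⟩ : H) = C (T u) := by
      intro u
      apply ext_inner_right ℂ
      intro w
      have hrhs : ⟪C (T u), w⟫ = ⟪(u : H), (T ⟨C w, hCmem w⟩ : H)⟫ := by
        rw [symC (T u) w]
        exact hsymm u ⟨C w, hCmem w⟩
      rw [hrhs]
      -- LHS
      have e0 : ⟪(T ⟨C (u : H), hCmem (u : H)⟩ : H), w⟫
          = ⟪(T ⟨C (u : H), hCmem (u : H)⟩ : H), C w⟫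
            + ⟪(T ⟨C (u : H), hCmem (u : H)⟩ : H),
                (T ⟨(T ⟨C w, hCmem w⟩ : H), hC2mem w⟩ : H)⟫ := by
        conv_lhs => rw [← hCeq w]
        rw [inner_add_right]
      rw [e0]
      have e1 : ⟪(T ⟨C (u : H), hCmem (u : H)⟩ : H), C w⟫
          = ⟪C (u : H), (T ⟨C w, hCmem w⟩ : H)⟫ :=
        hsymm ⟨C (u : H), hCmem (u : H)⟩ ⟨C w, hCmem w⟩
      have e2 : ⟪(T ⟨C (u : H), hCmem (u : H)⟩ : H),
          (T ⟨(T ⟨C w, hCmem w⟩ : H), hC2mem w⟩ : H)⟫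
          = ⟪(T ⟨(T ⟨C (u : H), hCmem (u : H)⟩ : H), hC2mem (u : H)⟩ : H),
              (T ⟨C w, hCmem w⟩ : H)⟫ :=
        (hsymm ⟨(T ⟨C (u : H), hCmem (u : H)⟩ : H), hC2mem (u : H)⟩
          ⟨(T ⟨C w, hCmem w⟩ : H), hC2mem w⟩).symm
      have e3 : (T ⟨(T ⟨C (u : H), hCmem (u : H)⟩ : H), hC2mem (u : H)⟩ : H)
          = (u : H) - C (u : H) := by
        rw [eq_sub_iff_add_eq, add_comm]
        exact hCeq (u : H)
      rw [e1, e2, e3, inner_sub_left]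
      ring
    have hSC : ∀ x : H, S (C x) = C (S x) := by
      intro x
      rw [hSeq (C x)]
      have h1 : (⟨R₀ (C x), hRmem (C x)⟩ : T.domain) = ⟨C (R₀ x), hCmem (R₀ x)⟩ := by
        apply Subtype.ext
        show R₀ (C x) = C (R₀ x)
        rw [hCx x, hCx (R₀ x)]
      rw [congrArg (fun z => (T z : H)) h1, lemA ⟨R₀ x, hRmem x⟩, ← hSeq x]
    have hSCcomm : Commute S C := by
      ext x; simpa [ContinuousLinearMap.mul_apply] using hSC x
    have hSR : Commute S R₀ := commute_sqrt_s14 hCpos hRpos hRR hSCcomm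
    have hSRx : ∀ x : H, S (R₀ x) = R₀ (S x) := by
      intro x
      have := DFunLike.congr_fun hSR.eq x
      simpa [ContinuousLinearMap.mul_apply] using this
    have hCS2 : ∀ x : H, C x + S (S x) = x := by
      intro x
      have e3 : (⟨(T ⟨C x, hCmem x⟩ : H), hC2mem x⟩ : T.domain)
          = ⟨R₀ (S x), hRmem (S x)⟩ := by
        apply Subtype.ext
        show (T ⟨C x, hCmem x⟩ : H) = R₀ (S x)
        have e1 : (⟨C x, hCmem x⟩ : T.domain) = ⟨R₀ (R₀ x), hRmem (R₀ x)⟩ :=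
          Subtype.ext (hCx x)
        rw [congrArg (fun z => (T z : H)) e1, ← hSeq (R₀ x), hSRx x]
      have e4 : (T ⟨(T ⟨C x, hCmem x⟩ : H), hC2mem x⟩ : H) = S (S x) :=
        (congrArg (fun z => (T z : H)) e3).trans (hSeq (S x)).symm
      rw [← e4]
      exact hCeq x
    have hCinj : ∀ x : H, C x = 0 → x = 0 := by
      intro x hx
      have h1 : (⟨C x, hCmem x⟩ : T.domain) = 0 := Subtype.ext (by simpa using hx)
      have h2 : (T ⟨C x, hCmem x⟩ : H) = 0 :=
        (congrArg (fun z => (T z : H)) h1).trans T.map_zero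
      have h3 : (⟨(T ⟨C x, hCmem x⟩ : H), hC2mem x⟩ : T.domain) = 0 :=
        Subtype.ext (by simpa using h2)
      have h5 : (T ⟨(T ⟨C x, hCmem x⟩ : H), hC2mem x⟩ : H) = 0 :=
        (congrArg (fun z => (T z : H)) h3).trans T.map_zero
      have h4 := hCeq x
      rw [h5, add_zero, hx] at h4
      exact h4.symm
    -- S is self-adjoint
    have hadjC : ∀ x : H, (ContinuousLinearMap.adjoint S) (C x) = S (C x) := by
      intro x
      apply ext_inner_right ℂ
      intro y
      rw [ContinuousLinearMap.adjoint_inner_left]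
      have e1 : ⟪C x, S y⟫ = ⟪(T ⟨C x, hCmem x⟩ : H), R₀ y⟫ := by
        rw [hSeq y]
        exact (hsymm ⟨C x, hCmem x⟩ ⟨R₀ y, hRmem y⟩).symm
      have e2 : ⟪(T ⟨C x, hCmem x⟩ : H), R₀ y⟫ = ⟪R₀ (T ⟨C x, hCmem x⟩ : H), y⟫ :=
        (symR (T ⟨C x, hCmem x⟩ : H) y).symm
      have e3 : S (C x) = R₀ (T ⟨C x, hCmem x⟩ : H) := by
        rw [hSC x, hCx (S x), ← hSRx x, hSeq (R₀ x)]
        refine congrArg R₀ (congrArg (fun z => (T z : H)) ?_)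
        exact Subtype.ext (hCx x).symm
      rw [e1, e2, ← e3]
    have hadj : ContinuousLinearMap.adjoint S = S := by
      have hDC : (ContinuousLinearMap.adjoint S - S) * C = 0 := by
        ext x
        simp [ContinuousLinearMap.mul_apply, ContinuousLinearMap.sub_apply, hadjC x]
      have hstar : C * (S - ContinuousLinearMap.adjoint S) = 0 := by
        calc C * (S - ContinuousLinearMap.adjoint S)
            = star ((ContinuousLinearMap.adjoint S - S) * C) := by
              rw [star_mul, star_sub, hCpos.isSelfAdjoint.star_eq,
                ContinuousLinearMap.star_eq_adjoint,
                ContinuousLinearMap.star_eq_adjoint,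
                ContinuousLinearMap.adjoint_adjoint]
          _ = 0 := by rw [hDC, star_zero]
      ext y
      have h0 := DFunLike.congr_fun hstar y
      simp only [ContinuousLinearMap.mul_apply, ContinuousLinearMap.sub_apply,
        ContinuousLinearMap.zero_apply] at h0
      have h1 := hCinj _ h0
      rw [sub_eq_zero] at h1
      exact h1.symm
    have symS : ∀ x y : H, ⟪S x, y⟫ = ⟪x, S y⟫ := by
      intro x y
      conv_lhs => rw [← hadj]
      exact ContinuousLinearMap.adjoint_inner_left S y x
    have hB : ∀ u : T.domain, R₀ (T u) = S (u : H) := by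
      intro u
      apply ext_inner_right ℂ
      intro y
      calc ⟪R₀ (T u), y⟫ = ⟪(T u : H), R₀ y⟫ := symR (T u) y
        _ = ⟪(u : H), (T ⟨R₀ y, hRmem y⟩ : H)⟫ := hsymm u ⟨R₀ y, hRmem y⟩
        _ = ⟪(u : H), S y⟫ := by rw [← hSeq y]
        _ = ⟪S (u : H), y⟫ := (symS (u : H) y).symm
    have hsurj : ∀ u : T.domain, R₀ (R₀ (u : H) + S (T u)) = (u : H) := by
      intro u
      rw [map_add, ← hCx (u : H), ← hSRx ((T u : H)), hB u]
      exact hCS2 (u : H)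
    -- the affiliation property
    intro R hRmemc ψ
    have hSR' : S * R = R * S := Set.mem_centralizer_iff.mp hRmemc S hSA
    have hRSx : ∀ x : H, R (S x) = S (R x) := by
      intro x
      have := DFunLike.congr_fun hSR' x
      simpa [ContinuousLinearMap.mul_apply] using this.symm
    have hRCx2 : ∀ x : H, R (C x) = C (R x) := by
      intro x
      have e1 : C x = x - S (S x) := by
        rw [eq_sub_iff_add_eq]; exact hCS2 x
      have e2 : C (R x) = R x - S (S (R x)) := by
        rw [eq_sub_iff_add_eq]; exact hCS2 (R x)
      rw [e1, map_sub, e2, hRSx (S x), hRSx x]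
    have hRC : Commute R C := by
      ext x; simpa [ContinuousLinearMap.mul_apply] using hRCx2 x
    have hRR₀ : Commute R R₀ := commute_sqrt_s14 hCpos hRpos hRR hRC
    have hRR₀x : ∀ x : H, R (R₀ x) = R₀ (R x) := by
      intro x
      have := DFunLike.congr_fun hRR₀.eq x
      simpa [ContinuousLinearMap.mul_apply] using this
    set φ : H := R₀ (ψ : H) + S (T ψ) with hφdef
    have hφ : R₀ φ = (ψ : H) := hsurj ψ
    have hmem : R (ψ : H) ∈ T.domain := by
      have hh : R (ψ : H) = R₀ (R φ) := by rw [← hφ, hRR₀x φ]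
      rw [hh]; exact hRmem (R φ)
    refine ⟨hmem, ?_⟩
    have e1 : (⟨R (ψ : H), hmem⟩ : T.domain) = ⟨R₀ (R φ), hRmem (R φ)⟩ :=
      Subtype.ext (show R (ψ : H) = R₀ (R φ) by rw [← hφ, hRR₀x φ])
    have e2 : (⟨R₀ φ, hRmem φ⟩ : T.domain) = ψ := Subtype.ext hφ
    calc (T ⟨R (ψ : H), hmem⟩ : H) = (T ⟨R₀ (R φ), hRmem (R φ)⟩ : H) :=
        congrArg (fun z => (T z : H)) e1
      _ = S (R φ) := (hSeq (R φ)).symm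
      _ = R (S φ) := (hRSx φ).symm
      _ = R (T ψ) := by
          refine congrArg R ?_
          rw [hSeq φ]
          exact congrArg (fun z => (T z : H)) e2
end
end

section
/- Let T be a densely defined self-adjoint operator on a complex Hilbert space H with bounded transform S = T(I + T²)^{-1/2}. Then W*(T) = W*(S), where W*(T) = {T}'' is the bicommutant of the set of bounded operators commuting with T, and W*(S) is the von Neumann algebra generated by S and the identity. -/
noncomputable section

variable {H : Type*} [NormedAddCommGroup H] [InnerProductSpace ℂ H] [CompleteSpace H]

namespace WstarAux

open scoped LinearPMap

local notation "⟪" x ", " y "⟫" => @inner ℂ _ _ x y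

variable {T : H →ₗ.[ℂ] H}

lemma Tcongr {a b : H} (h1 : a ∈ T.domain) (h : a = b) :
    (T ⟨a, h1⟩ : H) = T ⟨b, h ▸ h1⟩ := by subst h; rfl

lemma Tsym (hdense : Dense (T.domain : Set H)) (hsa : IsSelfAdjoint T)
    (x y : T.domain) : ⟪T x, (y : H)⟫ = ⟪(x : H), T y⟫ := by
  have h := LinearPMap.adjoint_isFormalAdjoint hdense (T := T)
  rw [LinearPMap.isSelfAdjoint_def] at hsa
  rw [hsa] at h
  exact h x y

lemma memT (hdense : Dense (T.domain : Set H)) (hsa : IsSelfAdjoint T) {y φ : H}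
    (h : ∀ u : T.domain, ⟪φ, (u : H)⟫ = ⟪y, T u⟫) :
    ∃ hy : y ∈ T.domain, (T ⟨y, hy⟩ : H) = φ := by
  rw [LinearPMap.isSelfAdjoint_def] at hsa
  have hy : y ∈ (T†).domain := LinearPMap.mem_adjoint_domain_of_exists y ⟨φ, h⟩
  have hval : (T† ⟨y, hy⟩ : H) = φ := LinearPMap.adjoint_apply_eq hdense ⟨y, hy⟩ h
  have hex : ∃ hy : y ∈ (T†).domain, (T† ⟨y, hy⟩ : H) = φ := ⟨hy, hval⟩
  rwa [hsa] at hex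

end WstarAux

namespace WstarAux2

local notation "⟪" x ", " y "⟫" => @inner ℂ _ _ x y

open WstarAux

variable {T : H →ₗ.[ℂ] H}

set_option linter.unusedSectionVars false

lemma commute_elemental {A0 X : H →L[ℂ] H} (h0sa : star A0 = A0) (h0 : A0 * X = X * A0) :
    ∀ A ∈ StarAlgebra.elemental ℂ A0, A * X = X * A := by
  intro A hA
  induction hA using StarAlgebra.elemental.induction_on with
  | self => exact h0
  | star_self => rwa [h0sa]
  | algebraMap r => exact (Algebra.commutes r X)
  | add u hu v hv hu' hv' => rw [add_mul, mul_add, hu', hv']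
  | mul u hu v hv hu' hv' => rw [mul_assoc, hv', ← mul_assoc, hu', mul_assoc]
  | closure s hs hP v hv =>
      exact closure_minimal (fun u hu => hP u hu)
        (isClosed_eq (continuous_id.mul continuous_const)
          (continuous_const.mul continuous_id)) hv

lemma pmap_elemental (hdense : Dense (T.domain : Set H)) (hsa : IsSelfAdjoint T)
    {A0 : H →L[ℂ] H} (h0sa : star A0 = A0) (h0 : CommutesPMap T A0) :
    ∀ A ∈ StarAlgebra.elemental ℂ A0, CommutesPMap T A := by
  intro A hA
  induction hA using StarAlgebra.elemental.induction_on with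
  | self => exact h0
  | star_self => rwa [h0sa]
  | algebraMap r =>
      intro ψ
      have hv : (algebraMap ℂ (H →L[ℂ] H) r) (ψ : H) = r • (ψ : H) := by
        rw [Algebra.algebraMap_eq_smul_one]; rfl
      refine ⟨hv ▸ T.domain.smul_mem r ψ.2, ?_⟩
      rw [Tcongr _ hv]
      have : (T ⟨r • (ψ : H), T.domain.smul_mem r ψ.2⟩ : H) = T (r • ψ) := rfl
      rw [this, T.map_smul]
      rw [Algebra.algebraMap_eq_smul_one]; rfl
  | add u hu v hv hu' hv' =>
      intro ψ
      obtain ⟨h1, e1⟩ := hu' ψ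
      obtain ⟨h2, e2⟩ := hv' ψ
      have hv : (u + v) (ψ : H) = u ψ + v ψ := rfl
      refine ⟨hv ▸ add_mem h1 h2, ?_⟩
      rw [Tcongr _ hv]
      have : (T ⟨u ψ + v ψ, _⟩ : H) = T (⟨u ψ, h1⟩ + ⟨v ψ, h2⟩ : T.domain) := rfl
      rw [this, T.map_add, e1, e2]
      rfl
  | mul u hu v hv hu' hv' =>
      intro ψ
      obtain ⟨h2, e2⟩ := hv' ψ
      obtain ⟨h1, e1⟩ := hu' ⟨v ψ, h2⟩
      have hv : (u * v) (ψ : H) = u (v ψ) := rfl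
      refine ⟨hv ▸ h1, ?_⟩
      exact e1.trans (congrArg u e2)
  | closure s hs hP v hv =>
      intro ψ
      rw [mem_closure_iff_seq_limit] at hv
      obtain ⟨f, hfs, hf⟩ := hv
      have happ : ∀ w : H, Filter.Tendsto (fun n => f n w) Filter.atTop (nhds (v w)) := by
        intro w
        exact ((ContinuousLinearMap.apply ℂ H w).continuous.tendsto v).comp hf
      apply memT hdense hsa
      intro u
      have h1 : Filter.Tendsto (fun n => ⟪f n (T ψ), (u : H)⟫) Filter.atTop
          (nhds ⟪v (T ψ), (u : H)⟫) := (happ (T ψ)).inner tendsto_const_nhds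
      have h2 : Filter.Tendsto (fun n => ⟪f n (ψ : H), T u⟫) Filter.atTop
          (nhds ⟪v (ψ : H), T u⟫) := (happ (ψ : H)).inner tendsto_const_nhds
      refine tendsto_nhds_unique (h1.congr fun n => ?_) h2
      obtain ⟨hm, he⟩ := hP (f n) (hfs n) ψ
      rw [← he]
      exact Tsym hdense hsa ⟨f n ψ, hm⟩ u

end WstarAux2

namespace WstarAux3
open scoped NNReal

lemma cfc_mem_elemental (C : H →L[ℂ] H) [IsStarNormal C] (g : ℂ → ℂ) :
    cfc g C ∈ StarAlgebra.elemental ℂ C := by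
  refine cfc_cases (fun x => x ∈ StarAlgebra.elemental ℂ C) C g (zero_mem _) ?_
  intro hg hn
  rw [cfcHom_eq_of_isStarNormal]
  simp only [StarAlgHom.comp_apply, StarSubalgebra.coe_subtype]
  exact SetLike.coe_mem _

set_option synthInstance.maxHeartbeats 1000000 in
set_option maxHeartbeats 1000000 in
lemma sqrt_mem_elemental {C R : H →L[ℂ] H} (hCpos : C.IsPositive) (hRpos : R.IsPositive)
    (hRR : R * R = C) : R ∈ StarAlgebra.elemental ℂ C := by
  have hCsa : IsSelfAdjoint C := hCpos.isSelfAdjoint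
  have hn : IsStarNormal C := hCsa.isStarNormal
  have hCnn : (0 : H →L[ℂ] H) ≤ C := (ContinuousLinearMap.nonneg_iff_isPositive C).mpr hCpos
  have hRnn : (0 : H →L[ℂ] H) ≤ R := (ContinuousLinearMap.nonneg_iff_isPositive R).mpr hRpos
  have h1 : CFC.sqrt C = R := CFC.sqrt_unique hRR hRnn
  have h2 : CFC.sqrt C = cfc (fun x : ℝ≥0 => NNReal.sqrt x) C := by
    rw [CFC.sqrt]
    exact cfcₙ_eq_cfc
  have h3 : cfc (fun x : ℝ≥0 => NNReal.sqrt x) C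
      = cfc (fun x : ℝ => ((NNReal.sqrt x.toNNReal : ℝ≥0) : ℝ)) C :=
    cfc_nnreal_eq_real (a := C) _ hCnn
  have h4 : cfc (fun x : ℝ => ((NNReal.sqrt x.toNNReal : ℝ≥0) : ℝ)) C
      = cfc (fun z : ℂ => (((NNReal.sqrt z.re.toNNReal : ℝ≥0) : ℝ) : ℂ)) C :=
    cfc_real_eq_complex _ hCsa
  rw [← h1, h2, h3, h4]
  exact cfc_mem_elemental C _

end WstarAux3

namespace WstarMain
open WstarAux WstarAux2 WstarAux3

local notation "⟪" x ", " y "⟫" => @inner ℂ _ _ x y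

set_option linter.unusedSectionVars false

variable {T : H →ₗ.[ℂ] H} {S C R : H →L[ℂ] H}

lemma Tval {a b : H} (h1 : a ∈ T.domain) (h2 : b ∈ T.domain) (h : a = b) :
    (T ⟨a, h1⟩ : H) = T ⟨b, h2⟩ := by subst h; rfl

lemma uniq (hdense : Dense (T.domain : Set H)) (hsa : IsSelfAdjoint T)
    (hC : ∀ x : H, ∃ (h1 : C x ∈ T.domain) (h2 : (T ⟨C x, h1⟩ : H) ∈ T.domain),
        C x + T ⟨(T ⟨C x, h1⟩ : H), h2⟩ = x)
    {x y : H} (hy : y ∈ T.domain) (hy2 : (T ⟨y, hy⟩ : H) ∈ T.domain)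
    (heq : y + (T ⟨(T ⟨y, hy⟩ : H), hy2⟩ : H) = x) : y = C x := by
  obtain ⟨h1, h2, hCeq⟩ := hC x
  have hdm : y - C x ∈ T.domain := sub_mem hy h1
  have hTdeq : (T ⟨y - C x, hdm⟩ : H) = T ⟨y, hy⟩ - T ⟨C x, h1⟩ := by
    have e0 : (⟨y - C x, hdm⟩ : T.domain) = ⟨y, hy⟩ - ⟨C x, h1⟩ := by
      apply Subtype.ext; simp
    rw [e0, T.map_sub]
  have hTdm : (T ⟨y - C x, hdm⟩ : H) ∈ T.domain := by rw [hTdeq]; exact sub_mem hy2 h2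
  have hTTd : (T ⟨(T ⟨y - C x, hdm⟩ : H), hTdm⟩ : H) = -(y - C x) := by
    have e1 : (⟨(T ⟨y - C x, hdm⟩ : H), hTdm⟩ : T.domain)
        = ⟨(T ⟨y, hy⟩ : H), hy2⟩ - ⟨(T ⟨C x, h1⟩ : H), h2⟩ := by
      apply Subtype.ext; simp [hTdeq]
    rw [e1, T.map_sub, eq_sub_of_add_eq' heq, eq_sub_of_add_eq' hCeq]
    abel
  have h3 := Tsym hdense hsa ⟨(T ⟨y - C x, hdm⟩ : H), hTdm⟩ ⟨y - C x, hdm⟩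
  rw [hTTd, inner_neg_left] at h3
  have hkey : ⟪(y - C x : H), (y - C x : H)⟫
      = -⟪(T ⟨y - C x, hdm⟩ : H), (T ⟨y - C x, hdm⟩ : H)⟫ := by
    rw [← neg_neg (⟪(y - C x : H), (y - C x : H)⟫)]
    rw [h3]
  rw [inner_self_eq_norm_sq_to_K, inner_self_eq_norm_sq_to_K] at hkey
  have hr : (‖y - C x‖ : ℝ) ^ 2 = -‖(T ⟨y - C x, hdm⟩ : H)‖ ^ 2 := by exact_mod_cast hkey
  have hn : ‖y - C x‖ = 0 := by
    nlinarith [norm_nonneg (y - C x), norm_nonneg (T ⟨y - C x, hdm⟩ : H)]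
  exact sub_eq_zero.mp (norm_eq_zero.mp hn)

lemma hTC (hdense : Dense (T.domain : Set H)) (hsa : IsSelfAdjoint T)
    (hC : ∀ x : H, ∃ (h1 : C x ∈ T.domain) (h2 : (T ⟨C x, h1⟩ : H) ∈ T.domain),
        C x + T ⟨(T ⟨C x, h1⟩ : H), h2⟩ = x) :
    CommutesPMap T C := by
  intro ψ
  obtain ⟨h1, h2, heq⟩ := hC (ψ : H)
  refine ⟨h1, ?_⟩
  have hv : (T ⟨(T ⟨C (ψ : H), h1⟩ : H), h2⟩ : H) = (ψ : H) - C (ψ : H) :=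
    eq_sub_of_add_eq' heq
  have hsm : (ψ : H) - C (ψ : H) ∈ T.domain := sub_mem ψ.2 h1
  have hy2 : (T ⟨(T ⟨C (ψ : H), h1⟩ : H), h2⟩ : H) ∈ T.domain := by rw [hv]; exact hsm
  refine uniq hdense hsa hC h2 hy2 ?_
  rw [Tval hy2 hsm hv]
  have e0 : (⟨(ψ : H) - C (ψ : H), hsm⟩ : T.domain) = ψ - ⟨C (ψ : H), h1⟩ := by
    apply Subtype.ext; simp
  rw [e0, T.map_sub]
  abel

lemma comC (hdense : Dense (T.domain : Set H)) (hsa : IsSelfAdjoint T)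
    (hC : ∀ x : H, ∃ (h1 : C x ∈ T.domain) (h2 : (T ⟨C x, h1⟩ : H) ∈ T.domain),
        C x + T ⟨(T ⟨C x, h1⟩ : H), h2⟩ = x)
    {B : H →L[ℂ] H} (hB : CommutesPMap T B) : C * B = B * C := by
  ext x
  obtain ⟨h1, h2, heq⟩ := hC x
  obtain ⟨hb, eb⟩ := hB ⟨C x, h1⟩
  obtain ⟨hb2, eb2⟩ := hB ⟨(T ⟨C x, h1⟩ : H), h2⟩
  have hy2 : (T ⟨B (C x), hb⟩ : H) ∈ T.domain := by rw [eb]; exact hb2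
  have key : B (C x) = C (B x) := by
    refine uniq hdense hsa hC hb hy2 ?_
    rw [Tval hy2 hb2 eb, eb2, ← map_add]
    rw [heq]
  exact key.symm

set_option maxHeartbeats 1000000 in
lemma main_eq (hdense : Dense (T.domain : Set H)) (hsa : IsSelfAdjoint T)
    (hCpos : C.IsPositive) (hRpos : R.IsPositive) (hRR : R * R = C)
    (hC : ∀ x : H, ∃ (h1 : C x ∈ T.domain) (h2 : (T ⟨C x, h1⟩ : H) ∈ T.domain),
        C x + T ⟨(T ⟨C x, h1⟩ : H), h2⟩ = x)
    (hS : ∀ x : H, ∃ hx : R x ∈ T.domain, S x = T ⟨R x, hx⟩) :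
    {B : H →L[ℂ] H | CommutesPMap T B} =
      Set.centralizer ((StarAlgebra.elemental ℂ S : StarSubalgebra ℂ (H →L[ℂ] H)) :
        Set (H →L[ℂ] H)) := by
  have hCsa : star C = C := hCpos.isSelfAdjoint.star_eq
  have hRsa : star R = R := hRpos.isSelfAdjoint.star_eq
  have hRmem : R ∈ StarAlgebra.elemental ℂ C := sqrt_mem_elemental hCpos hRpos hRR
  have hTCc : CommutesPMap T C := hTC hdense hsa hC
  have hTR : CommutesPMap T R := pmap_elemental hdense hsa hCsa hTCc R hRmem
  have hRRx : ∀ x : H, R (R x) = C x := fun x => ContinuousLinearMap.ext_iff.mp hRR x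
  have hSsym : ∀ (a b : T.domain), ⟪S (a : H), (b : H)⟫ = ⟪(a : H), S (b : H)⟫ := by
    intro a b
    obtain ⟨ha1, hSa⟩ := hS (a : H)
    obtain ⟨hb1, hSb⟩ := hS (b : H)
    obtain ⟨ha2, ea⟩ := hTR a
    rw [hSa, hSb]
    calc (⟪(T ⟨R (a : H), ha1⟩ : H), (b : H)⟫ : ℂ)
        = ⟪R (T a), (b : H)⟫ := by rw [(Tval ha1 ha2 rfl).trans ea]
      _ = ⟪T a, R (b : H)⟫ :=
          (ContinuousLinearMap.isSelfAdjoint_iff_isSymmetric.mp hRpos.isSelfAdjoint) (T a) (b : H)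
      _ = ⟪(a : H), (T ⟨R (b : H), hb1⟩ : H)⟫ := Tsym hdense hsa a ⟨R (b : H), hb1⟩
  have hSsa : star S = S := by
    have hsym : IsSelfAdjoint S := by
      rw [ContinuousLinearMap.isSelfAdjoint_iff_isSymmetric]
      have step1 : ∀ a : T.domain, (fun y => (⟪S (a : H), y⟫ : ℂ)) = fun y => ⟪(a : H), S y⟫ := by
        intro a
        refine Continuous.ext_on hdense (continuous_const.inner continuous_id)
          (continuous_const.inner S.continuous) ?_
        intro y hy
        exact hSsym a ⟨y, hy⟩
      intro x y
      have step2 : (fun x' => (⟪S x', y⟫ : ℂ)) = fun x' => ⟪x', S y⟫ := by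
        refine Continuous.ext_on hdense (S.continuous.inner continuous_const)
          (continuous_id.inner continuous_const) ?_
        intro x' hx'
        exact congrFun (step1 ⟨x', hx'⟩) y
      exact congrFun step2 x
    exact hsym.star_eq
  have hSS : S * S = 1 - C := by
    ext x
    obtain ⟨h1, h2, heq⟩ := hC x
    obtain ⟨hx, hSx⟩ := hS x
    obtain ⟨hx2, hSx2⟩ := hS (S x)
    obtain ⟨hrx, hTRRx⟩ := hTR ⟨R x, hx⟩
    have hRSx : R (S x) = (T ⟨C x, h1⟩ : H) := by
      rw [hSx, ← hTRRx]
      exact Tval hrx h1 (hRRx x)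
    calc (S * S) x = T ⟨R (S x), hx2⟩ := hSx2
      _ = T ⟨(T ⟨C x, h1⟩ : H), h2⟩ := Tval hx2 h2 hRSx
      _ = x - C x := eq_sub_of_add_eq' heq
      _ = (1 - C) x := by simp
  ext B
  simp only [Set.mem_setOf_eq]
  constructor
  · intro hB
    rw [Set.mem_centralizer_iff]
    intro A hA
    have hCB : C * B = B * C := comC hdense hsa hC hB
    have hRB : R * B = B * R := commute_elemental hCsa hCB R hRmem
    have hSB : S * B = B * S := by
      ext x
      obtain ⟨hbx, hSbx⟩ := hS (B x)
      obtain ⟨hx, hSx⟩ := hS x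
      obtain ⟨hb, hTb⟩ := hB ⟨R x, hx⟩
      have hRBx : R (B x) = B (R x) := ContinuousLinearMap.ext_iff.mp hRB x
      calc (S * B) x = T ⟨R (B x), hbx⟩ := hSbx
        _ = B (T ⟨R x, hx⟩) := (Tval hbx (hRBx ▸ hb) hRBx).trans ((Tval _ hb rfl).trans hTb)
        _ = B (S x) := by rw [← hSx]
    exact commute_elemental hSsa hSB A hA
  · intro hB
    have hB' := Set.mem_centralizer_iff.mp hB
    have hSB : S * B = B * S := hB' S (StarAlgebra.elemental.self_mem ℂ S)
    have hC1 : C = 1 - S * S := by rw [hSS]; abel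
    have hCB : C * B = B * C := by
      rw [hC1]
      calc (1 - S * S) * B = B - S * (S * B) := by rw [sub_mul, one_mul, mul_assoc]
        _ = B - S * (B * S) := by rw [hSB]
        _ = B - (S * B) * S := by rw [mul_assoc]
        _ = B - (B * S) * S := by rw [hSB]
        _ = B * (1 - S * S) := by rw [mul_sub, mul_one, mul_assoc]
    have hCS : C * S = S * C := by
      rw [hC1, sub_mul, mul_sub, one_mul, mul_one, mul_assoc]
    have hRB : R * B = B * R := commute_elemental hCsa hCB R hRmem
    have hRS : R * S = S * R := commute_elemental hCsa hCS R hRmem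
    intro ψ
    obtain ⟨hψd, hSψ⟩ := hS (ψ : H)
    obtain ⟨hd', hTRψ⟩ := hTR ψ
    have hRTψ2 : R (T ψ) = S (ψ : H) := by rw [← hTRψ, hSψ]
    have hRχ : R (R (ψ : H) + S (T ψ)) = (ψ : H) := by
      rw [map_add, hRRx]
      have e1 : R (S (T ψ)) = S (R (T ψ)) := ContinuousLinearMap.ext_iff.mp hRS (T ψ)
      have e2 : S (S (ψ : H)) = (ψ : H) - C (ψ : H) := by
        have e3 := ContinuousLinearMap.ext_iff.mp hSS (ψ : H)
        simpa using e3
      rw [e1, hRTψ2, e2]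
      abel
    obtain ⟨hm, hSBχ⟩ := hS (B (R (ψ : H) + S (T ψ)))
    have hBR : B (R (R (ψ : H) + S (T ψ))) = R (B (R (ψ : H) + S (T ψ))) :=
      (ContinuousLinearMap.ext_iff.mp hRB _).symm
    have hBψmem : B (ψ : H) ∈ T.domain := by rw [← hRχ, hBR]; exact hm
    refine ⟨hBψmem, ?_⟩
    obtain ⟨hχd, hSχ⟩ := hS (R (ψ : H) + S (T ψ))
    calc (T ⟨B (ψ : H), hBψmem⟩ : H)
        = T ⟨R (B (R (ψ : H) + S (T ψ))), hm⟩ := Tval _ _ ((congrArg B hRχ.symm).trans hBR)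
      _ = S (B (R (ψ : H) + S (T ψ))) := hSBχ.symm
      _ = B (S (R (ψ : H) + S (T ψ))) := ContinuousLinearMap.ext_iff.mp hSB _
      _ = B (T ⟨R (R (ψ : H) + S (T ψ)), hχd⟩) := by rw [hSχ]
      _ = B (T ψ) := by rw [Tval hχd ψ.2 hRχ]

end WstarMain

/-- `W*(T) = W*(S)`: the bicommutant `{T}''` of the set of bounded operators commuting with
`T` equals the von Neumann algebra `C*(S)''` generated by the bounded transform `S`. -/
theorem wstarT_eq_wstarS (T : H →ₗ.[ℂ] H) (S : H →L[ℂ] H)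
    (hdense : Dense (T.domain : Set H)) (hsa : IsSelfAdjoint T)
    (hbt : IsBoundedTransform T S) :
    Set.centralizer {R : H →L[ℂ] H | CommutesPMap T R} =
      Set.centralizer (Set.centralizer
        ((StarAlgebra.elemental ℂ S : StarSubalgebra ℂ (H →L[ℂ] H)) :
          Set (H →L[ℂ] H))) := by
  obtain ⟨C, R, hCpos, hRpos, hRR, hC, hS⟩ := hbt
  have h := WstarMain.main_eq (T := T) (S := S) hdense hsa hCpos hRpos hRR hC hS
  rw [h]
end
end

section
/- Let T be a densely defined self-adjoint operator on a complex Hilbert space H with bounded transform S = T(I + T²)^{-1/2}. Then the bounded positive operator √(I - S²) (the positive square root of I - S²) is injective and its range equals the domain D(T) of T. -/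
noncomputable section

variable {H : Type*} [NormedAddCommGroup H] [InnerProductSpace ℂ H] [CompleteSpace H]

section Aux

local notation "⟪" x ", " y "⟫" => @inner ℂ _ _ x y

set_option maxHeartbeats 1000000 in
set_option synthInstance.maxHeartbeats 1000000 in
lemma aux_commute_cfc {A : Type*} [NormedRing A] [StarRing A] [CompleteSpace A]
    [NormedAlgebra ℝ A] [ContinuousFunctionalCalculus ℝ A (IsSelfAdjoint : A → Prop)]
    {a b : A} (hab : Commute a b) (f : ℝ → ℝ) :
    Commute b (cfc f a) := by
  refine cfc_cases (fun x => Commute b x) a f (Commute.zero_right b) fun hf ha' => ?_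
  suffices hall : ∀ g : C(spectrum ℝ a, ℝ), Commute b (cfcHom ha' g) from hall _
  intro g
  have hcl : IsClosed {g : C(spectrum ℝ a, ℝ) | Commute b (cfcHom ha' g)} := by
    have hc : Continuous (cfcHom ha' (R := ℝ)) := cfcHom_continuous ha'
    exact isClosed_eq (continuous_const.mul hc) (hc.mul continuous_const)
  have hpoly : ∀ g ∈ polynomialFunctions (spectrum ℝ a), Commute b (cfcHom ha' g) := by
    intro g hg
    rw [polynomialFunctions.eq_adjoin_X] at hg
    induction hg using Algebra.adjoin_induction with
    | mem x hx =>
      rw [Set.mem_singleton_iff] at hx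
      subst hx
      have hX : (Polynomial.toContinuousMapOnAlgHom (spectrum ℝ a)) Polynomial.X
          = (ContinuousMap.id ℝ).restrict (spectrum ℝ a) := by
        ext x; simp
      rw [hX, cfcHom_id ha']
      exact hab.symm
    | algebraMap r =>
      rw [AlgHomClass.commutes]
      exact Algebra.commute_algebraMap_right r b
    | add x y hx hy hpx hpy =>
      rw [map_add]; exact hpx.add_right hpy
    | mul x y hx hy hpx hpy =>
      rw [map_mul]; exact hpx.mul_right hpy
  have htop : g ∈ ((polynomialFunctions (spectrum ℝ a)).topologicalClosure :
      Set C(spectrum ℝ a, ℝ)) := by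
    rw [polynomialFunctions.topologicalClosure (spectrum ℝ a)]
    trivial
  exact (hcl.closure_subset_iff.2 hpoly) htop

lemma aux_denseRange {H : Type*} [NormedAddCommGroup H] [InnerProductSpace ℂ H]
    [CompleteSpace H] (a : H →L[ℂ] H) (hinj : ∀ x, a x = 0 → x = 0)
    (ha : IsSelfAdjoint a) : Dense (Set.range a) := by
  have hsym := ContinuousLinearMap.isSelfAdjoint_iff_isSymmetric.1 ha
  have htop : (LinearMap.range (a : H →ₗ[ℂ] H)).topologicalClosure = ⊤ := by
    rw [← Submodule.orthogonal_orthogonal_eq_closure]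
    rw [Submodule.orthogonal_eq_top_iff]
    ext y
    simp only [Submodule.mem_orthogonal, Submodule.mem_bot]
    constructor
    · intro hy
      apply hinj
      apply ext_inner_right ℂ
      intro z
      have h0 := hy (a z) (LinearMap.mem_range_self _ z)
      have h1 : ⟪a y, z⟫ = ⟪y, a z⟫ := hsym y z
      rw [h1, ← inner_conj_symm, h0, map_zero, inner_zero_left]
    · rintro rfl u _; exact inner_zero_right u
  have h2 := congrArg (fun K : Submodule ℂ H => (K : Set H)) htop
  simp only [Submodule.topologicalClosure_coe, Submodule.top_coe, LinearMap.coe_range,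
    ContinuousLinearMap.coe_coe] at h2
  rw [dense_iff_closure_eq]
  exact h2

end Aux

local notation "⟪" x ", " y "⟫" => @inner ℂ _ _ x y

set_option maxHeartbeats 2000000 in
set_option synthInstance.maxHeartbeats 1000000 in
/-- The positive square root `√(I - S²)` is injective and its range is exactly the domain
of `T`. -/
theorem sqrt_one_sub_sq_injective_range_eq_domain (T : H →ₗ.[ℂ] H) (S : H →L[ℂ] H)
    (hdense : Dense (T.domain : Set H)) (hsa : IsSelfAdjoint T)
    (hbt : IsBoundedTransform T S)
    (R : H →L[ℂ] H) (hR : R.IsPositive) (hRR : R * R = 1 - S * S) :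
    Function.Injective R ∧ Set.range R = (T.domain : Set H) := by
  obtain ⟨C, R₀, hCpos, hR₀pos, hR₀R₀, hres, hSR⟩ := hbt
  -- symmetry of T
  have hTsym : ∀ ψ φ : T.domain, ⟪(T ψ : H), (φ : H)⟫ = ⟪(ψ : H), (T φ : H)⟫ := by
    have h := T.adjoint_isFormalAdjoint hdense
    rw [LinearPMap.isSelfAdjoint_def.mp hsa] at h
    exact fun ψ φ => h ψ φ
  -- symmetry of R₀
  have hsymR₀ : ∀ a b : H, ⟪R₀ a, b⟫ = ⟪a, R₀ b⟫ :=
    fun a b => (ContinuousLinearMap.isSelfAdjoint_iff_isSymmetric.1 hR₀pos.isSelfAdjoint) a b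
  -- choice functions from the hypotheses
  have hCmem : ∀ x : H, C x ∈ T.domain := fun x => (hres x).choose
  have hTCmem : ∀ x : H, (T ⟨C x, hCmem x⟩ : H) ∈ T.domain := fun x => (hres x).choose_spec.choose
  have hCeq : ∀ x : H, C x + (T ⟨(T ⟨C x, hCmem x⟩ : H), hTCmem x⟩ : H) = x :=
    fun x => (hres x).choose_spec.choose_spec
  have hR₀mem : ∀ x : H, R₀ x ∈ T.domain := fun x => (hSR x).choose
  have hSeq : ∀ x : H, S x = T ⟨R₀ x, hR₀mem x⟩ := fun x => (hSR x).choose_spec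
  -- congruence and subtraction helpers for T
  have hText : ∀ {v w : H} (hv : v ∈ T.domain) (hw : w ∈ T.domain), v = w →
      (T ⟨v, hv⟩ : H) = T ⟨w, hw⟩ := by
    rintro v w hv hw rfl; rfl
  have hT0 : (T ⟨(0 : H), T.domain.zero_mem⟩ : H) = 0 := by
    have h0 : (⟨(0 : H), T.domain.zero_mem⟩ : T.domain) = 0 := rfl
    rw [h0, T.map_zero]
  have hTsub : ∀ (v w : H) (hv : v ∈ T.domain) (hw : w ∈ T.domain),
      (T ⟨v - w, Submodule.sub_mem _ hv hw⟩ : H) = T ⟨v, hv⟩ - T ⟨w, hw⟩ := by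
    intro v w hv hw
    have h0 : (⟨v - w, Submodule.sub_mem _ hv hw⟩ : T.domain) = ⟨v, hv⟩ - ⟨w, hw⟩ := rfl
    rw [h0, T.map_sub]
  -- basic facts
  have hCR : ∀ x : H, C x = R₀ (R₀ x) := fun x => by rw [← hR₀R₀]; rfl
  have hTC : ∀ x : H, (T ⟨C x, hCmem x⟩ : H) = S (R₀ x) := fun x =>
    (hText (hCmem x) (hR₀mem (R₀ x)) (hCR x)).trans (hSeq (R₀ x)).symm
  have hSR₀mem : ∀ x : H, S (R₀ x) ∈ T.domain := fun x => hTC x ▸ hTCmem x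
  have hTSR₀ : ∀ x : H, (T ⟨S (R₀ x), hSR₀mem x⟩ : H) = x - C x := by
    intro x
    have h1 := hCeq x
    have h2 : (T ⟨(T ⟨C x, hCmem x⟩ : H), hTCmem x⟩ : H) = T ⟨S (R₀ x), hSR₀mem x⟩ :=
      hText _ _ (hTC x)
    rw [h2] at h1
    exact eq_sub_of_add_eq' h1
  -- injectivity of C and R₀
  have hCinj : ∀ x : H, C x = 0 → x = 0 := by
    intro x hx
    have h2 : (T ⟨C x, hCmem x⟩ : H) = 0 := (hText _ _ hx).trans hT0
    have h3 : (T ⟨(T ⟨C x, hCmem x⟩ : H), hTCmem x⟩ : H) = 0 := (hText _ _ h2).trans hT0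
    calc x = C x + (T ⟨(T ⟨C x, hCmem x⟩ : H), hTCmem x⟩ : H) := (hCeq x).symm
      _ = 0 := by rw [h3, hx, add_zero]
  have hR₀inj : ∀ x : H, R₀ x = 0 → x = 0 := fun x hx =>
    hCinj x (by rw [hCR x, hx, map_zero])
  -- injectivity of 1 + T²
  have hinj2 : ∀ (η : H) (hη : η ∈ T.domain) (hη2 : (T ⟨η, hη⟩ : H) ∈ T.domain),
      η + (T ⟨(T ⟨η, hη⟩ : H), hη2⟩ : H) = 0 → η = 0 := by
    intro η hη hη2 heq
    have e1 : ⟪η, η⟫ + ⟪(T ⟨(T ⟨η, hη⟩ : H), hη2⟩ : H), η⟫ = (0 : ℂ) := by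
      have h := congrArg (fun v : H => (inner ℂ v η : ℂ)) heq
      simpa [inner_add_left] using h
    have e2 : ⟪(T ⟨(T ⟨η, hη⟩ : H), hη2⟩ : H), η⟫ = ⟪(T ⟨η, hη⟩ : H), (T ⟨η, hη⟩ : H)⟫ :=
      hTsym ⟨(T ⟨η, hη⟩ : H), hη2⟩ ⟨η, hη⟩
    rw [e2, inner_self_eq_norm_sq_to_K, inner_self_eq_norm_sq_to_K] at e1
    have e4 : ‖η‖ ^ 2 + ‖(T ⟨η, hη⟩ : H)‖ ^ 2 = 0 := by
      have h := congrArg Complex.re e1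
      simpa [← Complex.ofReal_pow] using h
    have e5 : ‖η‖ = 0 := by nlinarith [sq_nonneg ‖η‖, sq_nonneg ‖(T ⟨η, hη⟩ : H)‖]
    exact norm_eq_zero.mp e5
  -- C(Tψ) = T(Cψ) = S(R₀ψ) for ψ in the domain of T
  have hCT : ∀ ψ : T.domain, S (R₀ (ψ : H)) = C (T ψ) := by
    intro ψ
    set y : H := (T ψ : H) with hy
    have hηmem : S (R₀ (ψ : H)) - C y ∈ T.domain :=
      Submodule.sub_mem _ (hSR₀mem (ψ : H)) (hCmem y)
    have hTη : (T ⟨S (R₀ (ψ : H)) - C y, hηmem⟩ : H)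
        = ((ψ : H) - C (ψ : H)) - (T ⟨C y, hCmem y⟩ : H) := by
      have h1 : (T ⟨S (R₀ (ψ : H)) - C y, hηmem⟩ : H)
          = (T ⟨S (R₀ (ψ : H)), hSR₀mem (ψ : H)⟩ : H) - T ⟨C y, hCmem y⟩ :=
        hTsub _ _ _ _
      rw [h1, hTSR₀ (ψ : H)]
    have hTηmem : ((ψ : H) - C (ψ : H)) - (T ⟨C y, hCmem y⟩ : H) ∈ T.domain :=
      Submodule.sub_mem _ (Submodule.sub_mem _ ψ.2 (hCmem (ψ : H))) (hTCmem y)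
    have hη2 : (T ⟨S (R₀ (ψ : H)) - C y, hηmem⟩ : H) ∈ T.domain := by
      rw [hTη]; exact hTηmem
    have hTTη : (T ⟨(T ⟨S (R₀ (ψ : H)) - C y, hηmem⟩ : H), hη2⟩ : H)
        = -(S (R₀ (ψ : H)) - C y) := by
      have h1 : (T ⟨(T ⟨S (R₀ (ψ : H)) - C y, hηmem⟩ : H), hη2⟩ : H)
          = T ⟨((ψ : H) - C (ψ : H)) - (T ⟨C y, hCmem y⟩ : H), hTηmem⟩ :=
        hText _ _ hTη
      have h2 : (T ⟨((ψ : H) - C (ψ : H)) - (T ⟨C y, hCmem y⟩ : H), hTηmem⟩ : H)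
          = (T ⟨(ψ : H) - C (ψ : H), Submodule.sub_mem _ ψ.2 (hCmem (ψ : H))⟩ : H)
            - T ⟨(T ⟨C y, hCmem y⟩ : H), hTCmem y⟩ :=
        hTsub _ _ _ _
      have h3 : (T ⟨(ψ : H) - C (ψ : H), Submodule.sub_mem _ ψ.2 (hCmem (ψ : H))⟩ : H)
          = y - T ⟨C (ψ : H), hCmem (ψ : H)⟩ := by
        have := hTsub (ψ : H) (C (ψ : H)) ψ.2 (hCmem (ψ : H))
        rw [this]
      have h4 : (T ⟨(T ⟨C y, hCmem y⟩ : H), hTCmem y⟩ : H) = y - C y :=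
        eq_sub_of_add_eq' (hCeq y)
      rw [h1, h2, h3, h4, hTC (ψ : H)]
      abel
    have h0 : S (R₀ (ψ : H)) - C y = 0 := by
      apply hinj2 _ hηmem hη2
      rw [hTTη]
      abel
    have := sub_eq_zero.mp h0
    rw [hy] at this
    exact this
  -- commutation of C with S * R₀
  have hCB : ∀ x : H, C (S (R₀ x)) = S (R₀ (C x)) := by
    intro x
    have h := hCT ⟨C x, hCmem x⟩
    have h2 : C (T ⟨C x, hCmem x⟩ : H) = C (S (R₀ x)) := congrArg C (hTC x)
    exact (h.trans h2).symm
  have hcomm1 : Commute C (S * R₀) := by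
    refine ContinuousLinearMap.ext fun x => ?_
    exact hCB x
  -- R₀ = cfc Real.sqrt C
  have hCnonneg : (0 : H →L[ℂ] H) ≤ C := (ContinuousLinearMap.nonneg_iff_isPositive C).2 hCpos
  have hR₀nonneg : (0 : H →L[ℂ] H) ≤ R₀ := (ContinuousLinearMap.nonneg_iff_isPositive R₀).2 hR₀pos
  have hRnonneg : (0 : H →L[ℂ] H) ≤ R := (ContinuousLinearMap.nonneg_iff_isPositive R).2 hR
  have hsqrtC : CFC.sqrt C = R₀ := CFC.sqrt_unique hR₀R₀ hR₀nonneg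
  have hcfcsq : cfc Real.sqrt C * cfc Real.sqrt C = C := by
    rw [← cfc_mul Real.sqrt Real.sqrt C Real.continuous_sqrt.continuousOn
      Real.continuous_sqrt.continuousOn]
    have h1 : cfc (fun x => Real.sqrt x * Real.sqrt x) C = cfc (id : ℝ → ℝ) C := by
      apply cfc_congr
      intro x hx
      exact Real.mul_self_sqrt (spectrum_nonneg_of_nonneg hCnonneg hx)
    rw [h1, cfc_id ℝ C hCpos.isSelfAdjoint]
  have hcfc_nonneg : (0 : H →L[ℂ] H) ≤ cfc Real.sqrt C :=
    cfc_nonneg (fun x _ => Real.sqrt_nonneg x)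
  have hR₀cfc : R₀ = cfc Real.sqrt C := by
    rw [← hsqrtC, CFC.sqrt_unique hcfcsq hcfc_nonneg]
  -- S * R₀ commutes with R₀
  have hcomm2 : Commute (S * R₀) R₀ := by
    have h := aux_commute_cfc hcomm1 Real.sqrt
    rwa [← hR₀cfc] at h
  -- R₀ has dense range
  have hdR : Dense (Set.range R₀) := aux_denseRange R₀ hR₀inj hR₀pos.isSelfAdjoint
  -- R₀ and S commute
  have hR₀S : ∀ y : H, R₀ (S y) = S (R₀ y) := by
    have hEq : (fun y : H => S (R₀ y)) = fun y : H => R₀ (S y) := by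
      apply Continuous.ext_on hdR (S.continuous.comp R₀.continuous)
        (R₀.continuous.comp S.continuous)
      rintro _ ⟨z, rfl⟩
      have h := congrArg (fun M : H →L[ℂ] H => M z) hcomm2
      simpa using h
    intro y
    exact (congrFun hEq y).symm
  -- R₀ T ⊆ S
  have hR₀T : ∀ ψ : T.domain, R₀ (T ψ : H) = S (ψ : H) := by
    intro ψ
    have key : ∀ z : H, ⟪R₀ (T ψ : H) - S (ψ : H), R₀ z⟫ = 0 := by
      intro z
      rw [inner_sub_left]
      have hL : ⟪R₀ (T ψ : H), R₀ z⟫ = ⟪R₀ (ψ : H), S z⟫ := by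
        calc ⟪R₀ (T ψ : H), R₀ z⟫ = ⟪(T ψ : H), R₀ (R₀ z)⟫ := hsymR₀ _ _
          _ = ⟪(T ψ : H), C z⟫ := by rw [← hCR z]
          _ = ⟪(ψ : H), (T ⟨C z, hCmem z⟩ : H)⟫ := hTsym ψ ⟨C z, hCmem z⟩
          _ = ⟪(ψ : H), S (R₀ z)⟫ := by rw [hTC z]
          _ = ⟪(ψ : H), R₀ (S z)⟫ := by rw [hR₀S z]
          _ = ⟪R₀ (ψ : H), S z⟫ := (hsymR₀ _ _).symm
      have hRt : ⟪S (ψ : H), R₀ z⟫ = ⟪R₀ (ψ : H), S z⟫ := by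
        calc ⟪S (ψ : H), R₀ z⟫ = ⟪(T ⟨R₀ (ψ : H), hR₀mem (ψ : H)⟩ : H), R₀ z⟫ := by
              rw [← hSeq (ψ : H)]
          _ = ⟪R₀ (ψ : H), (T ⟨R₀ z, hR₀mem z⟩ : H)⟫ := hTsym ⟨R₀ (ψ : H), hR₀mem _⟩ ⟨R₀ z, hR₀mem z⟩
          _ = ⟪R₀ (ψ : H), S z⟫ := by rw [← hSeq z]
      rw [hL, hRt, sub_self]
    have h0 : R₀ (R₀ (T ψ : H) - S (ψ : H)) = 0 := by
      apply ext_inner_right ℂ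
      intro z
      have := key z
      rw [← hsymR₀] at this
      rw [this, inner_zero_left]
    exact sub_eq_zero.mp (hR₀inj _ h0)
  -- S² = 1 - C pointwise
  have hSS : ∀ x : H, S (S x) = x - C x := by
    intro x
    calc S (S x) = T ⟨R₀ (S x), hR₀mem (S x)⟩ := hSeq (S x)
      _ = T ⟨S (R₀ x), hSR₀mem x⟩ := hText _ _ (hR₀S x)
      _ = x - C x := hTSR₀ x
  have hC1SS : (1 : H →L[ℂ] H) - S * S = C := by
    refine ContinuousLinearMap.ext fun x => ?_
    have h := hSS x
    show x - S (S x) = C x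
    rw [h]
    abel
  -- R = R₀
  have hRR₀ : R = R₀ := by
    have h1 : CFC.sqrt ((1 : H →L[ℂ] H) - S * S) = R := CFC.sqrt_unique hRR hRnonneg
    rw [hC1SS] at h1
    rw [← h1, hsqrtC]
  constructor
  · -- injectivity
    intro a b hab
    rw [hRR₀] at hab
    have h0 : R₀ (a - b) = 0 := by rw [map_sub, hab, sub_self]
    exact sub_eq_zero.mp (hR₀inj _ h0)
  · -- range
    rw [hRR₀]
    ext v
    constructor
    · rintro ⟨x, rfl⟩
      exact hR₀mem x
    · intro hv
      refine ⟨R₀ v + S (T ⟨v, hv⟩ : H), ?_⟩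
      rw [map_add]
      have h1 : R₀ (S (T ⟨v, hv⟩ : H)) = S (S v) := by
        calc R₀ (S (T ⟨v, hv⟩ : H)) = S (R₀ (T ⟨v, hv⟩ : H)) := hR₀S _
          _ = S (S v) := congrArg S (hR₀T ⟨v, hv⟩)
      rw [h1, hSS v, ← hCR v]
      abel
end
end
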